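/- arXiv:1312.7294 — 6 statements merged into one kernel-verified Lean document; each statement's English description precedes it below -/
import Mathlib

section
/- Let K be the fundamental group of the Klein bottle, presented as the group with generators x, y and the single relation x²y² = 1. Then there exists an integer n ≥ 2 such that K is not SL_n(ℂ)-free. -/
/-- A subset `S` of `SL_n(ℂ)` is Zariski-dense if every polynomial in the `n²` matrix
entries vanishing on `S` vanishes on all of `SL_n(ℂ)`. -/
def ZariskiDenseInSL (n : ℕ) (S : Set (Matrix.SpecialLinearGroup (Fin n) ℂ)) : Prop :=
  ∀ P : MvPolynomial (Fin n × Fin n) ℂ,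
    (∀ A ∈ S, MvPolynomial.eval (fun p => (A : Matrix (Fin n) (Fin n) ℂ) p.1 p.2) P = 0) →
    ∀ A : Matrix.SpecialLinearGroup (Fin n) ℂ,
      MvPolynomial.eval (fun p => (A : Matrix (Fin n) (Fin n) ℂ) p.1 p.2) P = 0

/-- A group `Γ` is `SL_n(ℂ)`-free if for every `γ ≠ 1` the set of values `φ γ` over all
homomorphisms `φ : Γ →* SL_n(ℂ)` is Zariski-dense in `SL_n(ℂ)`. -/
def IsSLFree (n : ℕ) (Γ : Type*) [Group Γ] : Prop :=
  ∀ γ : Γ, γ ≠ 1 →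
    ZariskiDenseInSL n {A | ∃ φ : Γ →* Matrix.SpecialLinearGroup (Fin n) ℂ, φ γ = A}

/-- The Klein bottle relator `x²y²` on generators `x = 0`, `y = 1`. -/
def kleinBottleRelator : FreeGroup (Fin 2) :=
  (FreeGroup.of 0) ^ 2 * (FreeGroup.of 1) ^ 2

/-- The fundamental group `⟨x, y ∣ x²y² = 1⟩` of the Klein bottle fails to be
`SL_n(ℂ)`-free for some `n ≥ 2`. -/
theorem kleinBottle_not_isSLFree :
    ∃ n : ℕ, 2 ≤ n ∧
      ¬ IsSLFree n (PresentedGroup ({kleinBottleRelator} : Set (FreeGroup (Fin 2)))) := by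
  refine ⟨3, by norm_num, fun h => ?_⟩
  set rels : Set (FreeGroup (Fin 2)) := {kleinBottleRelator} with hrels
  set X' : PresentedGroup rels := PresentedGroup.of 0 with hX'
  set Y' : PresentedGroup rels := PresentedGroup.of 1 with hY'
  -- the element γ = x*y
  set γ : PresentedGroup rels := X' * Y' with hγdef
  -- γ ≠ 1 via the homomorphism to ℤ/4 sending both generators to 1
  have hγ : γ ≠ 1 := by
    have hmap : ∀ r ∈ rels, FreeGroup.lift
        (fun _ : Fin 2 => Multiplicative.ofAdd (1 : ZMod 4)) r = 1 := by
      intro r hr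
      rw [hrels, Set.mem_singleton_iff] at hr
      subst hr
      rw [kleinBottleRelator]
      simp only [_root_.map_mul, _root_.map_pow, FreeGroup.lift_apply_of]
      decide
    intro hcon
    have h1 : (PresentedGroup.toGroup hmap) γ = 1 := by rw [hcon, _root_.map_one]
    rw [hγdef, hX', hY', _root_.map_mul, PresentedGroup.toGroup.of,
      PresentedGroup.toGroup.of] at h1
    exact absurd h1 (by decide)
  -- the relation x² y² = 1 holds in the presented group
  have hrel : X' ^ 2 * Y' ^ 2 = 1 := by
    have h1 : PresentedGroup.mk rels kleinBottleRelator = 1 :=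
      (QuotientGroup.eq_one_iff _).mpr
        (Subgroup.subset_normalClosure (by rw [hrels]; exact Set.mem_singleton _))
    rw [kleinBottleRelator, _root_.map_mul, _root_.map_pow, _root_.map_pow] at h1
    exact h1
  -- hence x γ x⁻¹ = γ⁻¹
  have hconj : X' * γ * X'⁻¹ = γ⁻¹ := by
    have h3 : X' ^ 2 * Y' = Y'⁻¹ := by
      have := congrArg (· * Y'⁻¹) hrel
      simpa [mul_assoc, sq] using this
    rw [hγdef, _root_.mul_inv_rev, ← h3, sq]
    simp only [mul_assoc]
  -- the polynomial tr(X) - tr(adj X)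
  set Mgen : Matrix (Fin 3) (Fin 3) (MvPolynomial (Fin 3 × Fin 3) ℂ) :=
    Matrix.of fun i j => MvPolynomial.X (i, j) with hMgen
  set P : MvPolynomial (Fin 3 × Fin 3) ℂ := Mgen.trace - (Matrix.adjugate Mgen).trace with hP
  have evalP : ∀ B : Matrix (Fin 3) (Fin 3) ℂ,
      MvPolynomial.eval (fun p => B p.1 p.2) P = B.trace - (Matrix.adjugate B).trace := by
    intro B
    set v : Fin 3 × Fin 3 → ℂ := fun p => B p.1 p.2 with hv
    have hmapM : Mgen.map (MvPolynomial.eval v) = B := by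
      ext i j
      simp [hMgen, Matrix.map_apply, hv]
    have ht : ∀ Q : Matrix (Fin 3) (Fin 3) (MvPolynomial (Fin 3 × Fin 3) ℂ),
        MvPolynomial.eval v Q.trace = (Q.map (MvPolynomial.eval v)).trace := by
      intro Q
      simp [Matrix.trace, Matrix.diag, map_sum, Matrix.map_apply]
    have hadj : (Matrix.adjugate Mgen).map (MvPolynomial.eval v)
        = Matrix.adjugate (Mgen.map (MvPolynomial.eval v)) := by
      have := RingHom.map_adjugate (MvPolynomial.eval v) Mgen
      simpa [RingHom.mapMatrix_apply] using this
    rw [hP, map_sub, ht, ht, hadj, hmapM]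
  -- the polynomial vanishes on all φ γ
  have hvan : ∀ A ∈ {A | ∃ φ : PresentedGroup rels →*
      Matrix.SpecialLinearGroup (Fin 3) ℂ, φ γ = A},
      MvPolynomial.eval (fun p => (A : Matrix (Fin 3) (Fin 3) ℂ) p.1 p.2) P = 0 := by
    rintro A ⟨φ, rfl⟩
    rw [evalP]
    have hc : φ X' * φ γ * (φ X')⁻¹ = (φ γ)⁻¹ := by
      rw [← _root_.map_inv, ← _root_.map_inv, ← _root_.map_mul, ← _root_.map_mul, hconj]
    set N : Matrix (Fin 3) (Fin 3) ℂ := ((φ X' : Matrix.SpecialLinearGroup (Fin 3) ℂ) :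
      Matrix (Fin 3) (Fin 3) ℂ) with hN
    set M : Matrix (Fin 3) (Fin 3) ℂ := ((φ γ : Matrix.SpecialLinearGroup (Fin 3) ℂ) :
      Matrix (Fin 3) (Fin 3) ℂ) with hM
    have hmat : N * M * Matrix.adjugate N = Matrix.adjugate M := by
      have h2 := congrArg (fun g : Matrix.SpecialLinearGroup (Fin 3) ℂ =>
        (g : Matrix (Fin 3) (Fin 3) ℂ)) hc
      simpa [hN, hM, Matrix.SpecialLinearGroup.coe_mul,
        Matrix.SpecialLinearGroup.coe_inv] using h2
    have htr : (Matrix.adjugate M).trace = M.trace := by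
      rw [← hmat, Matrix.trace_mul_comm, ← mul_assoc, Matrix.adjugate_mul,
        Matrix.SpecialLinearGroup.det_coe, one_smul, one_mul]
    rw [htr, sub_self]
  -- the witness matrix diag(2, 2, 1/4)
  have hdet : (!![(2:ℂ),0,0;0,2,0;0,0,4⁻¹] : Matrix (Fin 3) (Fin 3) ℂ).det = 1 := by
    rw [Matrix.det_fin_three]
    simp
    norm_num
  set A₀ : Matrix.SpecialLinearGroup (Fin 3) ℂ := ⟨!![(2:ℂ),0,0;0,2,0;0,0,4⁻¹], hdet⟩ with hA₀
  have hfinal := h γ hγ P hvan A₀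
  rw [evalP] at hfinal
  rw [hA₀] at hfinal
  simp only [Matrix.adjugate_fin_three_of, Matrix.trace_fin_three_of] at hfinal
  norm_num at hfinal
end

section
/- Let n ≥ 2 and let Γ be a finitely generated group which is SL_n(ℂ)-free. Then Γ is linear: there exists a natural number m and an injective group homomorphism from Γ into GL_m(ℂ). -/
noncomputable section SLFreeAux

open Matrix MvPolynomial Cardinal

namespace SLFreeAux

/-! ### Step 1: embedding a suitable domain into `ℂ` -/

/-- Any domain of cardinality at most the continuum receiving a ring hom from `ℂ`
embeds into `ℂ`. -/
theorem exists_embedding_complex (D : Type) [CommRing D] [IsDomain D]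
    (hD : #D ≤ Cardinal.continuum) (f : ℂ →+* D) :
    ∃ σ : D →+* ℂ, Function.Injective σ := by
  let F := FractionRing D
  let K := AlgebraicClosure F
  -- a ring hom from ℂ to K
  let j : ℂ →+* K := (algebraMap F K).comp ((algebraMap D F).comp f)
  have hjinj : Function.Injective j := j.injective
  haveI : CharZero K := by
    refine ⟨fun a b h => ?_⟩
    have : j (a : ℂ) = j (b : ℂ) := by simpa using h
    exact_mod_cast hjinj this
  have hFcard : #F ≤ Cardinal.continuum := le_trans (Localization.cardinalMk_le _) hD
  have hKcard : #K = #ℂ := by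
    rw [mk_complex]
    refine le_antisymm ?_ ?_
    · refine le_trans (Algebra.IsAlgebraic.cardinalMk_le_max F K) ?_
      exact sup_le hFcard (Cardinal.aleph0_le_continuum)
    · rw [← mk_complex]
      exact Cardinal.mk_le_of_injective hjinj
  have hKbig : Cardinal.aleph0 < #K := by
    rw [hKcard, mk_complex]; exact Cardinal.aleph0_lt_continuum
  obtain ⟨eqv⟩ := IsAlgClosed.ringEquiv_of_equiv_of_charZero (K := K) (L := ℂ) hKbig
    (Cardinal.eq.mp hKcard)
  refine ⟨eqv.toRingHom.comp ((algebraMap F K).comp (algebraMap D F)), ?_⟩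
  exact eqv.injective.comp ((algebraMap F K).injective.comp (IsFractionRing.injective D F))

/-- Any reduced Noetherian commutative ring of cardinality at most the continuum receiving a
ring hom from `ℂ` embeds into a finite power of `ℂ`. -/
theorem exists_embedding_pi (A : Type) [CommRing A] [IsNoetherianRing A] [IsReduced A]
    (hA : #A ≤ Cardinal.continuum) (f : ℂ →+* A) :
    ∃ (T : Type) (_ : Fintype T) (e : A →+* (T → ℂ)), Function.Injective e := by
  classical
  haveI : Fintype (minimalPrimes A) := (minimalPrimes.finite_of_isNoetherianRing A).fintype
  -- for each minimal prime, an embedding of the quotient domain into ℂ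
  have key : ∀ p : minimalPrimes A, ∃ σ : A ⧸ (p : Ideal A) →+* ℂ, Function.Injective σ := by
    intro ⟨p, hp⟩
    haveI : p.IsPrime := hp.1.1
    have hcard : #(A ⧸ p) ≤ Cardinal.continuum :=
      le_trans (Cardinal.mk_le_of_surjective Ideal.Quotient.mk_surjective) hA
    exact exists_embedding_complex (A ⧸ p) hcard ((Ideal.Quotient.mk p).comp f)
  choose σ hσ using key
  refine ⟨minimalPrimes A, inferInstance,
    Pi.ringHom fun p => (σ p).comp (Ideal.Quotient.mk (p : Ideal A)), ?_⟩
  rw [injective_iff_map_eq_zero]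
  intro a ha
  have hmem : ∀ p : minimalPrimes A, a ∈ (p : Ideal A) := by
    intro p
    have := congrFun ha p
    simp only [Pi.ringHom_apply, RingHom.comp_apply, Pi.zero_apply] at this
    have h0 : Ideal.Quotient.mk (p : Ideal A) a = 0 := by
      apply hσ p
      rw [map_zero]; exact this
    exact Ideal.Quotient.eq_zero_iff_mem.mp h0
  have hnil : a ∈ (⊥ : Ideal A).radical := by
    rw [← Ideal.sInf_minimalPrimes]
    exact (Submodule.mem_sInf).mpr fun p hp => hmem ⟨p, hp⟩
  obtain ⟨m, hm⟩ := hnil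
  exact IsReduced.eq_zero a ⟨m, by simpa using hm⟩

/-! ### Step 2: block-diagonal embedding of `SL_n(A)` into `GL_m(ℂ)` -/

variable {n : ℕ}

/-- Matrices over a product ring are products of matrices; as a ring hom. -/
def matrixPiHom (T : Type) (n : ℕ) :
    Matrix (Fin n) (Fin n) (T → ℂ) →+* (T → Matrix (Fin n) (Fin n) ℂ) where
  toFun M := fun t => Matrix.of fun i j => M i j t
  map_one' := by
    classical
    funext t
    ext i j
    by_cases h : i = j <;> simp [Matrix.one_apply, h]
  map_mul' M N := by
    funext t
    ext i j
    simp [Matrix.mul_apply, Finset.sum_apply]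
  map_zero' := by funext t; ext i j; simp
  map_add' M N := by funext t; ext i j; simp

theorem matrixPiHom_injective (T : Type) (n : ℕ) :
    Function.Injective (matrixPiHom T n) := by
  intro M N h
  ext i j t
  exact congrFun (congrFun (congrFun h t) i) j

theorem blockDiagonalRingHom_injective (T : Type) (n : ℕ) [Fintype T] [DecidableEq T] :
    Function.Injective (Matrix.blockDiagonalRingHom (Fin n) T ℂ) := by
  intro M N h
  funext t
  ext i j
  have := congrFun (congrFun h (i, t)) (j, t)
  change Matrix.blockDiagonal M (i, t) (j, t) = Matrix.blockDiagonal N (i, t) (j, t) at this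
  simpa [Matrix.blockDiagonal_apply_eq] using this

/-- Given an injective hom `Γ →* SL_n(A)` and an embedding of `A` into a finite power of `ℂ`,
we get an embedding of `Γ` into some `GL_m(ℂ)`. -/
theorem linear_of_SL_embedding {Γ : Type*} [Group Γ] {A : Type} [CommRing A]
    {T : Type} [Fintype T] (n : ℕ) (e : A →+* (T → ℂ)) (he : Function.Injective e)
    (ρ : Γ →* Matrix.SpecialLinearGroup (Fin n) A) (hρ : Function.Injective ρ) :
    ∃ (m : ℕ) (φ : Γ →* Matrix.GeneralLinearGroup (Fin m) ℂ), Function.Injective φ := by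
  classical
  let m : ℕ := n * Fintype.card T
  let er : Fin n × T ≃ Fin m :=
    ((Equiv.refl (Fin n)).prodCongr (Fintype.equivFin T)).trans finProdFinEquiv
  let F : Matrix (Fin n) (Fin n) A →+* Matrix (Fin m) (Fin m) ℂ :=
    ((Matrix.reindexAlgEquiv ℂ ℂ er).toRingEquiv.toRingHom.comp
      ((Matrix.blockDiagonalRingHom (Fin n) T ℂ).comp (matrixPiHom T n))).comp e.mapMatrix
  have h1 : Function.Injective (⇑(e.mapMatrix) : Matrix (Fin n) (Fin n) A → _) := by
    intro M N h
    have h2 : M.map e = N.map e := by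
      simpa only [RingHom.mapMatrix_apply] using h
    ext i j
    apply he
    have := congrFun (congrFun h2 i) j
    simpa only [Matrix.map_apply] using this
  have hF : Function.Injective F := by
    have hcoe : ⇑F = (⇑(Matrix.reindexAlgEquiv ℂ ℂ er)) ∘
        (⇑(Matrix.blockDiagonalRingHom (Fin n) T ℂ)) ∘ (⇑(matrixPiHom T n)) ∘
        (⇑(e.mapMatrix)) := by
      funext x; rfl
    rw [hcoe]
    exact ((Matrix.reindexAlgEquiv ℂ ℂ er).injective.comp
      ((blockDiagonalRingHom_injective T n).comp (matrixPiHom_injective T n))).comp h1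
  have htoGL : Function.Injective
      (⇑(Matrix.SpecialLinearGroup.toGL) : Matrix.SpecialLinearGroup (Fin n) A → _) := by
    intro a b h
    exact Subtype.coe_injective (congrArg Units.val h)
  refine ⟨m, (Units.map F.toMonoidHom).comp
    ((Matrix.SpecialLinearGroup.toGL).comp ρ), ?_⟩
  rw [MonoidHom.coe_comp, MonoidHom.coe_comp]
  exact (Units.map_injective hF).comp (htoGL.comp hρ)


/-! ### Step 3: the tautological representation over the coordinate ring -/

section Rep

variable {Γ : Type*} [Group Γ] (n k : ℕ) (g : Fin k → Γ)

/-- The point of affine space attached to a representation. -/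
def pt (φ : Γ →* Matrix.SpecialLinearGroup (Fin n) ℂ) : Fin k × Fin n × Fin n → ℂ :=
  fun v => ((φ (g v.1)) : Matrix (Fin n) (Fin n) ℂ) v.2.1 v.2.2

/-- The ideal of polynomials vanishing at all representation points. -/
def J : Ideal (MvPolynomial (Fin k × Fin n × Fin n) ℂ) where
  carrier := {f | ∀ φ : Γ →* Matrix.SpecialLinearGroup (Fin n) ℂ, eval (pt n k g φ) f = 0}
  add_mem' := by
    intro a b ha hb φ
    rw [map_add, ha φ, hb φ, add_zero]
  zero_mem' := fun φ => map_zero _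
  smul_mem' := by
    intro c x hx φ
    rw [smul_eq_mul, _root_.map_mul, hx φ, mul_zero]

theorem mem_J {f : MvPolynomial (Fin k × Fin n × Fin n) ℂ} :
    f ∈ J n k g ↔ ∀ φ : Γ →* Matrix.SpecialLinearGroup (Fin n) ℂ, eval (pt n k g φ) f = 0 :=
  Iff.rfl

/-- The coordinate ring of the representation variety. -/
abbrev Aring : Type := MvPolynomial (Fin k × Fin n × Fin n) ℂ ⧸ J n k g

theorem J_ne_top : J n k g ≠ ⊤ := by
  intro h
  have h1 : (1 : MvPolynomial (Fin k × Fin n × Fin n) ℂ) ∈ J n k g := by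
    rw [h]; trivial
  have := (mem_J n k g).mp h1 1
  rw [_root_.map_one] at this
  exact one_ne_zero this

instance : Nontrivial (Aring n k g) := Ideal.Quotient.nontrivial_iff.mpr (J_ne_top n k g)

instance : IsNoetherianRing (Aring n k g) :=
  isNoetherianRing_of_surjective _ _ (Ideal.Quotient.mk (J n k g))
    Ideal.Quotient.mk_surjective

instance : IsReduced (Aring n k g) := by
  refine ⟨fun a ⟨M, hM⟩ => ?_⟩
  obtain ⟨f, rfl⟩ := Ideal.Quotient.mk_surjective (I := J n k g) a
  rcases M with _ | M
  · exfalso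
    rw [pow_zero] at hM
    exact one_ne_zero hM
  have hM' : Ideal.Quotient.mk (J n k g) (f ^ (M + 1)) = 0 := by
    rw [_root_.map_pow]; exact hM
  rw [Ideal.Quotient.eq_zero_iff_mem] at hM'
  rw [Ideal.Quotient.eq_zero_iff_mem]
  intro φ
  have := (mem_J n k g).mp hM' φ
  rw [_root_.map_pow] at this
  exact pow_eq_zero_iff (Nat.succ_ne_zero M) |>.mp this

/-- Evaluation at a representation, as a ring hom from the coordinate ring. -/
def eφ (φ : Γ →* Matrix.SpecialLinearGroup (Fin n) ℂ) : Aring n k g →+* ℂ :=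
  Ideal.Quotient.lift (J n k g) (eval (pt n k g φ)) (fun _ hf => hf φ)

theorem eφ_mk (φ : Γ →* Matrix.SpecialLinearGroup (Fin n) ℂ)
    (f : MvPolynomial (Fin k × Fin n × Fin n) ℂ) :
    eφ n k g φ (Ideal.Quotient.mk (J n k g) f) = eval (pt n k g φ) f :=
  Ideal.Quotient.lift_mk _ _ _

theorem eφ_jointly_inj (a : Aring n k g)
    (h : ∀ φ : Γ →* Matrix.SpecialLinearGroup (Fin n) ℂ, eφ n k g φ a = 0) : a = 0 := by
  obtain ⟨f, rfl⟩ := Ideal.Quotient.mk_surjective (I := J n k g) a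
  rw [Ideal.Quotient.eq_zero_iff_mem]
  intro φ
  have := h φ
  rwa [eφ_mk] at this

/-- The generic matrix of polynomial variables. -/
def Mp (i : Fin k) : Matrix (Fin n) (Fin n) (MvPolynomial (Fin k × Fin n × Fin n) ℂ) :=
  Matrix.of fun a b => X (i, a, b)

theorem eval_Mp (φ : Γ →* Matrix.SpecialLinearGroup (Fin n) ℂ) (i : Fin k) :
    (eval (pt n k g φ)).mapMatrix (Mp n k i) = ((φ (g i)) : Matrix (Fin n) (Fin n) ℂ) := by
  ext a b
  simp [Mp, pt, RingHom.mapMatrix_apply, Matrix.map_apply]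

/-- The generic matrix, as an element of `SL_n` over the coordinate ring. -/
def Msl (i : Fin k) : Matrix.SpecialLinearGroup (Fin n) (Aring n k g) :=
  ⟨(Ideal.Quotient.mk (J n k g)).mapMatrix (Mp n k i), by
    rw [← RingHom.map_det, ← _root_.map_one (Ideal.Quotient.mk (J n k g)),
      Ideal.Quotient.mk_eq_mk_iff_sub_mem]
    intro φ
    rw [_root_.map_sub, _root_.map_one, RingHom.map_det, eval_Mp, (φ (g i)).prop, sub_self]⟩

/-- The word map on the free group, valued in `SL_n` of the coordinate ring. -/
def W : FreeGroup (Fin k) →* Matrix.SpecialLinearGroup (Fin n) (Aring n k g) :=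
  FreeGroup.lift (Msl n k g)

/-- The projection from the free group. -/
def piF : FreeGroup (Fin k) →* Γ := FreeGroup.lift g

theorem map_eφ_Msl (φ : Γ →* Matrix.SpecialLinearGroup (Fin n) ℂ) (i : Fin k) :
    Matrix.SpecialLinearGroup.map (eφ n k g φ) (Msl n k g i) = φ (g i) := by
  apply Subtype.coe_injective
  ext a b
  simp only [Matrix.SpecialLinearGroup.map_apply_coe, RingHom.mapMatrix_apply,
    Matrix.map_apply, Msl, Mp]
  show eφ n k g φ (Ideal.Quotient.mk (J n k g) (X (i, a, b))) = _
  rw [eφ_mk]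
  simp [pt]

theorem comp_eq (φ : Γ →* Matrix.SpecialLinearGroup (Fin n) ℂ) :
    (Matrix.SpecialLinearGroup.map (eφ n k g φ)).comp (W n k g) = φ.comp (piF k g) := by
  apply FreeGroup.ext_hom
  intro i
  simp only [MonoidHom.comp_apply, W, piF, FreeGroup.lift_apply_of]
  exact map_eφ_Msl n k g φ i

theorem map_eφ_W (φ : Γ →* Matrix.SpecialLinearGroup (Fin n) ℂ) (w : FreeGroup (Fin k)) :
    Matrix.SpecialLinearGroup.map (eφ n k g φ) (W n k g w) = φ (piF k g w) :=
  DFunLike.congr_fun (comp_eq n k g φ) w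

theorem ker_le : (piF k g).ker ≤ (W n k g).ker := by
  intro w hw
  rw [MonoidHom.mem_ker] at hw ⊢
  apply Subtype.coe_injective
  ext a b
  have key : ∀ φ : Γ →* Matrix.SpecialLinearGroup (Fin n) ℂ,
      eφ n k g φ (((W n k g w) : Matrix (Fin n) (Fin n) (Aring n k g)) a b) =
      eφ n k g φ ((1 : Matrix (Fin n) (Fin n) (Aring n k g)) a b) := by
    intro φ
    have h1 : Matrix.SpecialLinearGroup.map (eφ n k g φ) (W n k g w) = 1 := by
      rw [map_eφ_W, hw, _root_.map_one]
    have h2 := congrArg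
      (fun X : Matrix.SpecialLinearGroup (Fin n) ℂ => (X : Matrix (Fin n) (Fin n) ℂ) a b) h1
    simp only [Matrix.SpecialLinearGroup.map_apply_coe, RingHom.mapMatrix_apply,
      Matrix.map_apply, Matrix.SpecialLinearGroup.coe_one] at h2
    rw [h2]
    by_cases hab : a = b <;> simp [Matrix.one_apply, hab]
  have hsub : (((W n k g w) : Matrix (Fin n) (Fin n) (Aring n k g)) a b -
      (1 : Matrix (Fin n) (Fin n) (Aring n k g)) a b) = 0 := by
    apply eφ_jointly_inj
    intro φ
    rw [_root_.map_sub, key φ, sub_self]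
  rw [sub_eq_zero] at hsub
  simpa [Matrix.SpecialLinearGroup.coe_one] using hsub

variable (hg : Function.Surjective (piF k g))

/-- The tautological representation of `Γ` over the coordinate ring. -/
def ρ : Γ →* Matrix.SpecialLinearGroup (Fin n) (Aring n k g) :=
  (QuotientGroup.lift (piF k g).ker (W n k g) (ker_le n k g)).comp
    (QuotientGroup.quotientKerEquivOfSurjective (piF k g) hg).symm.toMonoidHom

theorem ρ_π (w : FreeGroup (Fin k)) : ρ n k g hg (piF k g w) = W n k g w := by
  have h1 : (QuotientGroup.quotientKerEquivOfSurjective (piF k g) hg).symm (piF k g w) =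
      QuotientGroup.mk w := by
    rw [MulEquiv.symm_apply_eq]
    rfl
  show (QuotientGroup.lift (piF k g).ker (W n k g) (ker_le n k g))
    ((QuotientGroup.quotientKerEquivOfSurjective (piF k g) hg).symm (piF k g w)) = _
  rw [h1]
  rfl

theorem map_eφ_ρ (φ : Γ →* Matrix.SpecialLinearGroup (Fin n) ℂ) (γ : Γ) :
    Matrix.SpecialLinearGroup.map (eφ n k g φ) (ρ n k g hg γ) = φ γ := by
  obtain ⟨w, rfl⟩ := hg γ
  rw [ρ_π, map_eφ_W]

end Rep

end SLFreeAux

end SLFreeAux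

/-- A finitely generated group which is `SL_n(ℂ)`-free (for some `n ≥ 2`) is linear:
it embeds into `GL_m(ℂ)` for some `m`. -/
theorem SLFree_implies_linear (n : ℕ) (hn : 2 ≤ n) (Γ : Type*) [Group Γ] [Group.FG Γ]
    (hfree : IsSLFree n Γ) :
    ∃ (m : ℕ) (φ : Γ →* Matrix.GeneralLinearGroup (Fin m) ℂ), Function.Injective φ := by
  classical
  obtain ⟨S, hS1, hS2⟩ := Group.fg_iff.mp (inferInstance : Group.FG Γ)
  haveI := hS2.fintype
  set k := Fintype.card S with hk
  let e0 : S ≃ Fin k := Fintype.equivFin S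
  let g : Fin k → Γ := fun i => ((e0.symm i : S) : Γ)
  have hgr : Set.range g = S := by
    have hgc : g = (Subtype.val : S → Γ) ∘ e0.symm := rfl
    rw [hgc, Set.range_comp, Equiv.range_eq_univ, Set.image_univ, Subtype.range_coe]
  have hg : Function.Surjective (SLFreeAux.piF k g) := by
    rw [← MonoidHom.range_eq_top]
    show (FreeGroup.lift g).range = ⊤
    rw [FreeGroup.range_lift_eq_closure, hgr, hS1]
  -- injectivity of the tautological representation
  have hρ : Function.Injective (SLFreeAux.ρ n k g hg) := by
    rw [injective_iff_map_eq_one]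
    intro γ hγ1
    by_contra hγ
    have hall : ∀ φ : Γ →* Matrix.SpecialLinearGroup (Fin n) ℂ, φ γ = 1 := by
      intro φ
      rw [← SLFreeAux.map_eφ_ρ n k g hg φ γ, hγ1, _root_.map_one]
    set i0 : Fin n := ⟨0, by omega⟩ with hi0
    set i1 : Fin n := ⟨1, by omega⟩ with hi1
    have hne : i0 ≠ i1 := by simp [hi0, hi1, Fin.ext_iff]
    have hvan : ∀ A ∈ {A | ∃ φ : Γ →* Matrix.SpecialLinearGroup (Fin n) ℂ, φ γ = A},
        MvPolynomial.eval (fun p => (A : Matrix (Fin n) (Fin n) ℂ) p.1 p.2)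
          (MvPolynomial.X (i0, i1) : MvPolynomial (Fin n × Fin n) ℂ) = 0 := by
      rintro A ⟨φ, rfl⟩
      rw [hall φ, MvPolynomial.eval_X]
      simp [Matrix.SpecialLinearGroup.coe_one, Matrix.one_apply, hne]
    have hcontra := hfree γ hγ _ hvan
      ⟨Matrix.transvection i0 i1 1, Matrix.det_transvection_of_ne i0 i1 hne 1⟩
    rw [MvPolynomial.eval_X] at hcontra
    simp only [Matrix.transvection, Matrix.single, Matrix.add_apply,
      Matrix.one_apply, Matrix.of_apply, hne, if_false, and_self, if_true] at hcontra
    norm_num at hcontra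
  -- the coordinate ring embeds into a finite power of ℂ
  have hPcard : Cardinal.mk (MvPolynomial (Fin k × Fin n × Fin n) ℂ) ≤ Cardinal.continuum := by
    refine le_trans MvPolynomial.cardinalMk_le_max_lift ?_
    refine sup_le (sup_le ?_ ?_) Cardinal.aleph0_le_continuum
    · rw [Cardinal.lift_id, Cardinal.mk_complex]
    · rw [Cardinal.lift_id]
      exact le_trans (Cardinal.lt_aleph0_of_finite _).le Cardinal.aleph0_le_continuum
  have hAcard : Cardinal.mk (SLFreeAux.Aring n k g (Γ := Γ)) ≤ Cardinal.continuum :=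
    le_trans (Cardinal.mk_le_of_surjective Ideal.Quotient.mk_surjective) hPcard
  obtain ⟨T, instT, e, he⟩ := SLFreeAux.exists_embedding_pi (SLFreeAux.Aring n k g) hAcard
    ((Ideal.Quotient.mk (SLFreeAux.J n k g)).comp
      (MvPolynomial.C : ℂ →+* MvPolynomial (Fin k × Fin n × Fin n) ℂ))
  haveI := instT
  exact SLFreeAux.linear_of_SL_embedding n e he (SLFreeAux.ρ n k g hg) hρ
end

section
/- Let Γ be a finitely generated group which is linear over ℂ (there exist m and an injective group homomorphism Γ → GL_m(ℂ)), and suppose Γ has infinitely many elements of order exactly 2. Then Γ is not almost SL_2(ℂ)-free: there exists an element γ ∈ Γ of infinite order such that the set of values φ(γ) over all group homomorphisms φ : Γ → SL_2(ℂ) is not Zariski-dense in SL_2(ℂ). -/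
lemma int_isJacobson : IsJacobsonRing ℤ := by
  rw [isJacobsonRing_iff_prime_eq]
  intro P hP
  by_cases hb : P = ⊥
  · subst hb
    refine le_antisymm ?_ Ideal.le_jacobson
    intro x hx
    rw [Ideal.mem_jacobson_bot] at hx
    have h1 := hx 1
    have h2 := hx (-1)
    rw [Int.isUnit_iff] at h1 h2
    simp only [Ideal.mem_bot]
    omega
  · haveI : P.IsMaximal := IsPrime.to_maximal_ideal hb
    exact Ideal.jacobson_eq_self_of_isMaximal

lemma entry_pow_mem {R : Type*} [CommRing R] {m : ℕ} {x : Matrix (Fin m) (Fin m) R} {J : Ideal R}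
    (hx : ∀ i j, x i j ∈ J) : ∀ t, 1 ≤ t → ∀ i j, (x ^ t) i j ∈ J ^ t := by
  intro t
  induction t with
  | zero => omega
  | succ t ih =>
    intro _ i j
    by_cases ht : t = 0
    · subst ht; simpa [pow_one] using hx i j
    · have h1 : 1 ≤ t := Nat.one_le_iff_ne_zero.2 ht
      rw [pow_succ, pow_succ, Matrix.mul_apply]
      exact Ideal.sum_mem _ fun k _ => Ideal.mul_mem_mul (ih h1 i k) (hx k j)

lemma key_cong {R : Type*} [CommRing R] [IsDomain R] [IsNoetherianRing R] {M : Ideal R}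
    (hM : M.IsMaximal) {p : ℕ} [CharP (R ⧸ M) p] {m : ℕ}
    {y : Matrix (Fin m) (Fin m) R}
    (h1 : y.map (Ideal.Quotient.mk M) = 1) {n : ℕ} (hn : 0 < n) (hpn : ¬ p ∣ n)
    (hyn : y ^ n = 1) : y = 1 := by
  obtain ⟨n', rfl⟩ : ∃ n', n = n' + 1 := ⟨n - 1, by omega⟩
  set x : Matrix (Fin m) (Fin m) R := y - 1 with hxdef
  have hy : y = x + 1 := by rw [hxdef]; abel
  have hx1 : ∀ i j, x i j ∈ M := by
    intro i j
    rw [← Ideal.Quotient.eq_zero_iff_mem]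
    have hmap : Ideal.Quotient.mk M (y i j) = (1 : Matrix (Fin m) (Fin m) (R ⧸ M)) i j := by
      rw [← h1, Matrix.map_apply]
    have hsub : Ideal.Quotient.mk M (x i j)
        = Ideal.Quotient.mk M (y i j) - Ideal.Quotient.mk M ((1 : Matrix (Fin m) (Fin m) R) i j) := by
      rw [hxdef, Matrix.sub_apply, map_sub]
    rw [hsub, hmap, Matrix.one_apply, Matrix.one_apply]
    split <;> simp
  have hcast : ∀ t : ℕ, x ^ t * ((n' + 1).choose t : Matrix (Fin m) (Fin m) R)
      = ((n' + 1).choose t) • x ^ t := by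
    intro t
    rw [nsmul_eq_mul, (Nat.cast_commute ((n' + 1).choose t) (x ^ t)).eq]
  have hbin : (1 : Matrix (Fin m) (Fin m) R)
      = (∑ t ∈ Finset.range n', ((n' + 1).choose (t + 2)) • x ^ (t + 2)) + (n' + 1) • x + 1 := by
    calc (1 : Matrix (Fin m) (Fin m) R) = y ^ (n' + 1) := hyn.symm
      _ = (x + 1) ^ (n' + 1) := by rw [← hy]
      _ = ∑ t ∈ Finset.range (n' + 2), x ^ t * 1 ^ (n' + 1 - t) * ((n' + 1).choose t : Matrix (Fin m) (Fin m) R) := Commute.add_pow (Commute.one_right x) (n' + 1)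
      _ = ∑ t ∈ Finset.range (n' + 2), ((n' + 1).choose t) • x ^ t := by
          refine Finset.sum_congr rfl fun t _ => ?_
          rw [one_pow, mul_one, hcast]
      _ = (∑ t ∈ Finset.range n', ((n' + 1).choose (t + 2)) • x ^ (t + 2)) + (n' + 1) • x + 1 := by
          rw [Finset.sum_range_succ', Finset.sum_range_succ']
          simp [Nat.choose_one_right]
  have hkey : ∀ t ∈ Finset.range n', ∀ (k : ℕ) (i j : Fin m), (∀ i j, x i j ∈ M ^ (k + 1)) →
      (((n' + 1).choose (t + 2)) • x ^ (t + 2)) i j ∈ M ^ (k + 2) := by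
    intro t _ k i j hk
    rw [Matrix.smul_apply]
    refine Submodule.smul_of_tower_mem _ _ ?_
    have h' := entry_pow_mem hk (t + 2) (by omega) i j
    rw [← pow_mul] at h'
    exact Ideal.pow_le_pow_right (by nlinarith) h'
  have hnM : ((n' + 1 : ℕ) : R) ∉ M := by
    intro hmem
    have h0 : ((n' + 1 : ℕ) : R ⧸ M) = 0 := by
      rw [← map_natCast (Ideal.Quotient.mk M), Ideal.Quotient.eq_zero_iff_mem]
      exact hmem
    exact hpn ((CharP.cast_eq_zero_iff (R ⧸ M) p _).1 h0)
  obtain ⟨z, w, hwM, hzw⟩ := hM.exists_inv hnM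
  have main : ∀ k : ℕ, ∀ i j, x i j ∈ M ^ (k + 1) := by
    intro k
    induction k with
    | zero => intro i j; simpa using hx1 i j
    | succ k ih =>
      intro i j
      have hsum0 : (∑ t ∈ Finset.range n', ((n' + 1).choose (t + 2)) • x ^ (t + 2)) + (n' + 1) • x = 0 := by
        have hb := hbin
        rwa [right_eq_add] at hb
      have hentry : (n' + 1) • x i j
          = -(∑ t ∈ Finset.range n', (((n' + 1).choose (t + 2)) • x ^ (t + 2)) i j) := by
        have hc := congrArg (fun z => z i j) hsum0
        simp only [Matrix.add_apply, Matrix.sum_apply, Matrix.smul_apply, Matrix.zero_apply] at hc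
        have := eq_neg_of_add_eq_zero_right hc
        simpa using this
      have hmem : ((n' + 1 : ℕ) : R) * x i j ∈ M ^ (k + 2) := by
        rw [← nsmul_eq_mul, hentry]
        exact Submodule.neg_mem _ (Ideal.sum_mem _ fun t ht => hkey t ht k i j ih)
      have hdecomp : x i j = z * (((n' + 1 : ℕ) : R) * x i j) + w * x i j := by
        calc x i j = (z * ((n' + 1 : ℕ) : R) + w) * x i j := by rw [hzw, one_mul]
          _ = z * (((n' + 1 : ℕ) : R) * x i j) + w * x i j := by ring
      rw [hdecomp]
      refine Submodule.add_mem _ (Ideal.mul_mem_left _ _ hmem) ?_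
      have hprod := Ideal.mul_mem_mul (ih i j) hwM
      rw [← pow_succ] at hprod
      rwa [mul_comm] at hprod
  have hbot : (⨅ k : ℕ, M ^ k) = ⊥ := M.iInf_pow_eq_bot_of_isDomain hM.ne_top
  have hx0 : x = 0 := by
    ext i j
    have hmeminf : x i j ∈ ⨅ k : ℕ, M ^ k := by
      rw [Submodule.mem_iInf]
      intro k
      cases k with
      | zero => simp
      | succ k => exact main k i j
    rw [hbot] at hmeminf
    simpa using hmeminf
  rw [hy, hx0, zero_add]

lemma residue_char_ne_zero {F : Type*} [Field F] (hfin : Module.Finite ℤ F) :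
    ringChar F ≠ 0 := by
  intro h0
  haveI : CharP F 0 := h0 ▸ ringChar.charP F
  haveI : CharZero F := CharP.charP_to_charZero F
  haveI : Algebra.IsIntegral ℤ F := Algebra.IsIntegral.of_finite ℤ F
  haveI : IsScalarTower ℤ ℚ F := IsScalarTower.of_algebraMap_eq fun n => by
    rw [eq_intCast (algebraMap ℤ F) n, eq_intCast (algebraMap ℤ ℚ) n, map_intCast]
  have hint : IsIntegral ℤ ((algebraMap ℚ F) (1/2 : ℚ)) := Algebra.IsIntegral.isIntegral _
  have h2 : IsIntegral ℤ (1/2 : ℚ) :=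
    IsIntegral.tower_bot (algebraMap ℚ F).injective hint
  obtain ⟨r, hr⟩ := IsIntegrallyClosed.isIntegral_iff.1 h2
  rw [eq_intCast] at hr
  have h3 : (2 : ℚ) * r = 1 := by rw [hr]; norm_num
  have h4 : (2 : ℤ) * r = 1 := by exact_mod_cast h3
  omega

lemma residue_finite {F : Type*} [Field F] (hfin : Module.Finite ℤ F) : Finite F := by
  have hp := residue_char_ne_zero hfin
  haveI : CharP F (ringChar F) := ringChar.charP F
  have torsion : AddMonoid.IsTorsion F := by
    intro x
    rw [isOfFinAddOrder_iff_nsmul_eq_zero]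
    refine ⟨ringChar F, Nat.pos_of_ne_zero hp, ?_⟩
    rw [nsmul_eq_mul, CharP.cast_eq_zero F, zero_mul]
  haveI : AddGroup.FG F := Module.Finite.iff_addGroup_fg.1 hfin
  exact AddCommGroup.finite_of_fg_torsion F torsion

lemma sl2_sq_eq_one {A : Matrix.SpecialLinearGroup (Fin 2) ℂ} (h : A * A = 1) :
    A = 1 ∨ (A : Matrix (Fin 2) (Fin 2) ℂ) = -1 := by
  have hdet : (A : Matrix (Fin 2) (Fin 2) ℂ).det = 1 := A.2
  have hmul : (A : Matrix (Fin 2) (Fin 2) ℂ) * (A : Matrix (Fin 2) (Fin 2) ℂ) = 1 := by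
    rw [← Matrix.SpecialLinearGroup.coe_mul, h]; rfl
  set B := (A : Matrix (Fin 2) (Fin 2) ℂ) with hB
  have h00 : B 0 0 * B 0 0 + B 0 1 * B 1 0 = 1 := by
    have := congrArg (fun M => M 0 0) hmul
    simpa [Matrix.mul_apply, Fin.sum_univ_two, Matrix.one_apply] using this
  have h01 : B 0 0 * B 0 1 + B 0 1 * B 1 1 = 0 := by
    have := congrArg (fun M => M 0 1) hmul
    simpa [Matrix.mul_apply, Fin.sum_univ_two, Matrix.one_apply] using this
  have h10 : B 1 0 * B 0 0 + B 1 1 * B 1 0 = 0 := by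
    have := congrArg (fun M => M 1 0) hmul
    simpa [Matrix.mul_apply, Fin.sum_univ_two, Matrix.one_apply] using this
  have hdet2 : B 0 0 * B 1 1 - B 0 1 * B 1 0 = 1 := by
    rw [← Matrix.det_fin_two]; exact hdet
  have htr : B 0 0 + B 1 1 ≠ 0 := by
    intro htr0
    have hd : B 1 1 = -(B 0 0) := by linear_combination htr0
    rw [hd] at hdet2
    have : B 0 0 * B 0 0 + B 0 1 * B 1 0 = -1 := by linear_combination -hdet2
    rw [h00] at this
    norm_num at this
  have hb : B 0 1 = 0 := by
    have : B 0 1 * (B 0 0 + B 1 1) = 0 := by linear_combination h01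
    rcases mul_eq_zero.1 this with h | h
    · exact h
    · exact absurd h htr
  have hc : B 1 0 = 0 := by
    have : B 1 0 * (B 0 0 + B 1 1) = 0 := by linear_combination h10
    rcases mul_eq_zero.1 this with h | h
    · exact h
    · exact absurd h htr
  have ha2 : B 0 0 * B 0 0 = 1 := by rw [hb] at h00; linear_combination h00
  have had : B 0 0 * B 1 1 = 1 := by rw [hb] at hdet2; linear_combination hdet2
  rcases mul_self_eq_one_iff.1 ha2 with ha | ha
  · left
    apply Subtype.ext
    show B = 1
    ext i j
    fin_cases i <;> fin_cases j <;>
      simp_all [Matrix.one_apply]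
  · right
    ext i j
    fin_cases i <;> fin_cases j <;> simp_all [Matrix.one_apply] <;> linear_combination -hdet2

lemma pow_ordProj_red_eq_one {R : Type*} [CommRing R] [IsDomain R] [IsNoetherianRing R]
    {M : Ideal R} (hM : M.IsMaximal) {m : ℕ} {G : Type*} [Group G]
    (Ψ : G →* Matrix (Fin m) (Fin m) R) {γ : G}
    (hp : (ringChar (R ⧸ M)).Prime)
    (hred : (Ψ γ).map (Ideal.Quotient.mk M) = 1) {n : ℕ} (hn : n ≠ 0) (hγn : γ ^ n = 1) :
    Ψ (γ ^ (ringChar (R ⧸ M) ^ (n.factorization (ringChar (R ⧸ M))))) = 1 := by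
  haveI : CharP (R ⧸ M) (ringChar (R ⧸ M)) := ringChar.charP _
  set p := ringChar (R ⧸ M) with hpdef
  set k := n.factorization p with hk
  rw [map_pow]
  have h1 : (Ψ γ ^ p ^ k).map (Ideal.Quotient.mk M) = 1 := by
    have : (Ψ γ ^ p ^ k).map (Ideal.Quotient.mk M)
        = ((Ψ γ).map (Ideal.Quotient.mk M)) ^ (p ^ k) := by
      rw [← RingHom.mapMatrix_apply, ← RingHom.mapMatrix_apply, map_pow]
    rw [this, hred, one_pow]
  refine key_cong hM h1 (n := n / p ^ k) (Nat.ordCompl_pos p hn) (Nat.not_dvd_ordCompl hp hn) ?_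
  rw [← pow_mul, Nat.mul_div_cancel' (Nat.ordProj_dvd n p), ← map_pow, hγn, map_one]

theorem aux_core {Γ : Type*} [Group Γ] {A : Type*} [CommRing A] [IsDomain A] [CharZero A]
    [Algebra.FiniteType ℤ A] {m : ℕ} (Ψ : Γ →* Matrix (Fin m) (Fin m) A)
    (hΨ1 : ∀ γ : Γ, Ψ γ = 1 → γ = 1)
    (hinv : {γ : Γ | orderOf γ = 2}.Infinite) :
    ∃ γ : Γ, ¬ IsOfFinOrder γ ∧ ∃ a b : Γ, orderOf a = 2 ∧ orderOf b = 2 ∧ γ = a * b := by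
  classical
  haveI : IsJacobsonRing ℤ := int_isJacobson
  haveI : IsNoetherianRing A := Algebra.FiniteType.isNoetherianRing ℤ A
  haveI : IsJacobsonRing A := isJacobsonRing_of_finiteType (A := ℤ)
  obtain ⟨M₁, hM₁⟩ := Ideal.exists_maximal A
  haveI := hM₁
  letI : Field (A ⧸ M₁) := Ideal.Quotient.field M₁
  haveI : Algebra.FiniteType ℤ (A ⧸ M₁) :=
    Algebra.FiniteType.of_surjective (Ideal.Quotient.mkₐ ℤ M₁)
      (Ideal.Quotient.mkₐ_surjective ℤ M₁)
  have hfin₁ : Module.Finite ℤ (A ⧸ M₁) := finite_of_finite_type_of_isJacobsonRing ℤ (A ⧸ M₁)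
  haveI hFfin₁ : Finite (A ⧸ M₁) := residue_finite hfin₁
  set p₁ := ringChar (A ⧸ M₁) with hp₁def
  haveI : CharP (A ⧸ M₁) p₁ := ringChar.charP _
  have hp₁ : p₁ ≠ 0 := residue_char_ne_zero hfin₁
  have hp₁prime : p₁.Prime := CharP.char_prime_of_ne_zero (A ⧸ M₁) hp₁
  have hp₁R : ((p₁ : ℕ) : A) ≠ 0 := Nat.cast_ne_zero.2 hp₁
  obtain ⟨M₂, hM₂, hp₁M₂⟩ : ∃ M : Ideal A, M.IsMaximal ∧ ((p₁ : ℕ) : A) ∉ M := by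
    by_contra hcon
    push_neg at hcon
    have hjac : Ideal.jacobson (⊥ : Ideal A) = ⊥ :=
      (isJacobsonRing_iff.1 inferInstance) ⊥ Ideal.isRadical_bot_of_noZeroDivisors
    have hmem' : ((p₁ : ℕ) : A) ∈ Ideal.jacobson (⊥ : Ideal A) := by
      rw [Ideal.jacobson, Submodule.mem_sInf]
      rintro J ⟨-, hJmax⟩
      exact hcon J hJmax
    rw [hjac] at hmem'
    exact hp₁R (by simpa using hmem')
  haveI := hM₂
  letI : Field (A ⧸ M₂) := Ideal.Quotient.field M₂
  haveI : Algebra.FiniteType ℤ (A ⧸ M₂) :=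
    Algebra.FiniteType.of_surjective (Ideal.Quotient.mkₐ ℤ M₂)
      (Ideal.Quotient.mkₐ_surjective ℤ M₂)
  have hfin₂ : Module.Finite ℤ (A ⧸ M₂) := finite_of_finite_type_of_isJacobsonRing ℤ (A ⧸ M₂)
  haveI hFfin₂ : Finite (A ⧸ M₂) := residue_finite hfin₂
  set p₂ := ringChar (A ⧸ M₂) with hp₂def
  haveI : CharP (A ⧸ M₂) p₂ := ringChar.charP _
  have hp₂ : p₂ ≠ 0 := residue_char_ne_zero hfin₂
  have hp₂prime : p₂.Prime := CharP.char_prime_of_ne_zero (A ⧸ M₂) hp₂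
  have hp₁p₂ : p₁ ≠ p₂ := by
    intro heq
    apply hp₁M₂
    have h0 : ((p₁ : ℕ) : A ⧸ M₂) = 0 := by
      rw [heq]
      exact CharP.cast_eq_zero _ p₂
    rwa [← map_natCast (Ideal.Quotient.mk M₂), Ideal.Quotient.eq_zero_iff_mem] at h0
  -- pigeonhole on involutions
  obtain ⟨a, ha, b, hb, hab, hfab⟩ :=
    hinv.exists_ne_map_eq_of_mapsTo
      (f := fun γ : Γ => ((Ψ γ).map (Ideal.Quotient.mk M₁), (Ψ γ).map (Ideal.Quotient.mk M₂)))
      (Set.mapsTo_univ _ _) Set.finite_univ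
  have ha2 : a * a = 1 := by
    have := pow_orderOf_eq_one a
    rwa [ha, sq] at this
  have hb2 : b * b = 1 := by
    have := pow_orderOf_eq_one b
    rwa [hb, sq] at this
  refine ⟨a * b, ?_, a, b, ha, hb, rfl⟩
  have hγne : a * b ≠ 1 := by
    intro h
    apply hab
    have h1 : a = b⁻¹ := eq_inv_of_mul_eq_one_left h
    have h2 : b⁻¹ = b := inv_eq_of_mul_eq_one_right hb2
    exact h1.trans h2
  have hred : ∀ (M : Ideal A),
      ((Ψ a).map (Ideal.Quotient.mk M) = (Ψ b).map (Ideal.Quotient.mk M)) →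
      (Ψ (a * b)).map (Ideal.Quotient.mk M) = 1 := by
    intro M hM
    have hmul : ∀ x y : Γ, (Ψ (x * y)).map (Ideal.Quotient.mk M)
        = (Ψ x).map (Ideal.Quotient.mk M) * (Ψ y).map (Ideal.Quotient.mk M) := by
      intro x y
      rw [map_mul, ← RingHom.mapMatrix_apply, ← RingHom.mapMatrix_apply,
        ← RingHom.mapMatrix_apply, map_mul]
    rw [hmul, hM, ← hmul, hb2, map_one, ← RingHom.mapMatrix_apply, map_one]
  have hfab1 := congrArg Prod.fst hfab
  have hfab2 := congrArg Prod.snd hfab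
  simp only at hfab1 hfab2
  have hred₁ := hred M₁ hfab1
  have hred₂ := hred M₂ hfab2
  intro hord
  set n := orderOf (a * b) with hn
  have hnpos : n ≠ 0 := hord.orderOf_pos.ne'
  have hpow : (a * b) ^ n = 1 := pow_orderOf_eq_one _
  have h₁ := pow_ordProj_red_eq_one hM₁ Ψ hp₁prime hred₁ hnpos hpow
  have h₂ := pow_ordProj_red_eq_one hM₂ Ψ hp₂prime hred₂ hnpos hpow
  have hd₁ : n ∣ p₁ ^ (n.factorization p₁) := orderOf_dvd_of_pow_eq_one (hΨ1 _ h₁)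
  have hd₂ : n ∣ p₂ ^ (n.factorization p₂) := orderOf_dvd_of_pow_eq_one (hΨ1 _ h₂)
  have hcop : Nat.Coprime (p₁ ^ (n.factorization p₁)) (p₂ ^ (n.factorization p₂)) :=
    Nat.Coprime.pow _ _ (Nat.coprime_primes hp₁prime hp₂prime |>.2 hp₁p₂)
  have hone : n = 1 := Nat.dvd_one.1 (hcop ▸ Nat.dvd_gcd hd₁ hd₂)
  exact hγne (orderOf_eq_one_iff.1 hone)



/-- A finitely generated linear group with infinitely many elements of order two is not
almost `SL_2(ℂ)`-free. -/
theorem linear_infinitely_many_involutions_not_almostSLFree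
    (Γ : Type*) [Group Γ] [Group.FG Γ]
    (hlin : ∃ (m : ℕ) (φ : Γ →* Matrix.GeneralLinearGroup (Fin m) ℂ),
      Function.Injective φ)
    (hinv : {γ : Γ | orderOf γ = 2}.Infinite) :
    ∃ γ : Γ, ¬ IsOfFinOrder γ ∧
      ¬ ZariskiDenseInSL 2
        {A | ∃ φ : Γ →* Matrix.SpecialLinearGroup (Fin 2) ℂ, φ γ = A} := by
  classical
  obtain ⟨m, ψ, hψ⟩ := hlin
  obtain ⟨S, hScl, hSfin⟩ := Group.fg_iff.1 (inferInstance : Group.FG Γ)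
  set E : Set ℂ := ⋃ s ∈ S,
      ((Set.range fun ij : Fin m × Fin m => ((ψ s : Matrix (Fin m) (Fin m) ℂ)) ij.1 ij.2) ∪
       (Set.range fun ij : Fin m × Fin m => ((ψ s⁻¹ : Matrix (Fin m) (Fin m) ℂ)) ij.1 ij.2))
    with hE
  have hEfin : E.Finite := hSfin.biUnion fun s _ => (Set.finite_range _).union (Set.finite_range _)
  set R : Subalgebra ℤ ℂ := Algebra.adjoin ℤ E with hR
  have hmem : ∀ γ : Γ, ∀ i j, ((ψ γ : Matrix (Fin m) (Fin m) ℂ)) i j ∈ R := by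
    have key : ∀ γ : Γ, (∀ i j, ((ψ γ : Matrix (Fin m) (Fin m) ℂ)) i j ∈ R) ∧
        (∀ i j, ((ψ γ⁻¹ : Matrix (Fin m) (Fin m) ℂ)) i j ∈ R) := by
      intro γ
      have hγ : γ ∈ Subgroup.closure S := hScl ▸ Subgroup.mem_top γ
      induction hγ using Subgroup.closure_induction with
      | mem s hs =>
        constructor
        · intro i j
          apply Algebra.subset_adjoin
          exact Set.mem_biUnion hs (Or.inl ⟨(i, j), rfl⟩)
        · intro i j
          apply Algebra.subset_adjoin
          exact Set.mem_biUnion hs (Or.inr ⟨(i, j), rfl⟩)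
      | one =>
        constructor <;>
        · intro i j
          simp only [inv_one, map_one, Units.val_one, Matrix.one_apply]
          split <;> [exact one_mem R; exact zero_mem R]
      | mul x y hx hy ihx ihy =>
        constructor
        · intro i j
          rw [map_mul, Units.val_mul, Matrix.mul_apply]
          exact Subalgebra.sum_mem R fun k _ => mul_mem (ihx.1 i k) (ihy.1 k j)
        · intro i j
          rw [mul_inv_rev, map_mul, Units.val_mul, Matrix.mul_apply]
          exact Subalgebra.sum_mem R fun k _ => mul_mem (ihy.2 i k) (ihx.2 k j)
      | inv x hx ihx =>
        exact ⟨ihx.2, by simpa using ihx.1⟩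
    exact fun γ => (key γ).1
  set V : Matrix (Fin m) (Fin m) ↥R →+* Matrix (Fin m) (Fin m) ℂ :=
    (Subalgebra.val R).toRingHom.mapMatrix with hV
  have hVapp : ∀ (X : Matrix (Fin m) (Fin m) ↥R) i j, V X i j = (X i j : ℂ) := by
    intro X i j; rfl
  have hVinj : Function.Injective V := by
    intro X Y hXY
    ext i j
    have h2 : V X i j = V Y i j := congrArg (fun M => M i j) hXY
    rw [hVapp, hVapp] at h2
    exact h2
  set Ψfun : Γ → Matrix (Fin m) (Fin m) ↥R :=
    fun γ => Matrix.of fun i j => (⟨(ψ γ : Matrix (Fin m) (Fin m) ℂ) i j, hmem γ i j⟩ : ↥R)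
    with hΨfun
  have hVΨ : ∀ γ, V (Ψfun γ) = (ψ γ : Matrix (Fin m) (Fin m) ℂ) := by
    intro γ; ext i j; rfl
  set Ψ : Γ →* Matrix (Fin m) (Fin m) ↥R :=
    { toFun := Ψfun
      map_one' := hVinj (by rw [hVΨ, map_one, map_one, Units.val_one])
      map_mul' := fun x y => hVinj (by
        rw [hVΨ, map_mul, map_mul, Units.val_mul, hVΨ, hVΨ]) }
    with hΨ
  have hΨ1 : ∀ γ : Γ, Ψ γ = 1 → γ = 1 := by
    intro γ h
    apply hψ
    rw [map_one]
    apply Units.ext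
    have h3 : V (Ψ γ) = V 1 := congrArg V h
    have h4 : (ψ γ : Matrix (Fin m) (Fin m) ℂ) = V 1 := (hVΨ γ).symm.trans h3
    rw [map_one] at h4
    rw [Units.val_one]
    exact h4
  have hRfg : R.FG := by
    rw [hR, ← hEfin.coe_toFinset]
    exact Subalgebra.fg_adjoin_finset _
  haveI hFT : Algebra.FiniteType ℤ ↥R := (Subalgebra.fg_iff_finiteType R).1 hRfg
  -- apply the core result
  obtain ⟨γ, hγinf, a, b, ha, hb, hγab⟩ := aux_core Ψ hΨ1 hinv
  refine ⟨γ, hγinf, ?_⟩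
  intro hdense
  have ha2 : a * a = 1 := by
    have := pow_orderOf_eq_one a
    rwa [ha, sq] at this
  have hb2 : b * b = 1 := by
    have := pow_orderOf_eq_one b
    rwa [hb, sq] at this
  -- the vanishing polynomial: the (0,1) entry
  have hvan : ∀ A ∈ {A | ∃ φ : Γ →* Matrix.SpecialLinearGroup (Fin 2) ℂ, φ γ = A},
      MvPolynomial.eval (fun p => (A : Matrix (Fin 2) (Fin 2) ℂ) p.1 p.2)
        (MvPolynomial.X ((0 : Fin 2), (1 : Fin 2))) = 0 := by
    rintro A ⟨φ, rfl⟩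
    rw [MvPolynomial.eval_X]
    have hcoe : ((φ γ : Matrix (Fin 2) (Fin 2) ℂ))
        = (φ a : Matrix (Fin 2) (Fin 2) ℂ) * (φ b : Matrix (Fin 2) (Fin 2) ℂ) := by
      rw [hγab, map_mul, Matrix.SpecialLinearGroup.coe_mul]
    have haφ : φ a * φ a = 1 := by rw [← map_mul, ha2, map_one]
    have hbφ : φ b * φ b = 1 := by rw [← map_mul, hb2, map_one]
    have hA : ∀ c : Matrix.SpecialLinearGroup (Fin 2) ℂ, c * c = 1 →
        (c : Matrix (Fin 2) (Fin 2) ℂ) = 1 ∨ (c : Matrix (Fin 2) (Fin 2) ℂ) = -1 := by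
      intro c hc
      rcases sl2_sq_eq_one hc with h | h
      · left; rw [h, Matrix.SpecialLinearGroup.coe_one]
      · right; exact h
    rcases hA _ haφ with h1 | h1 <;> rcases hA _ hbφ with h2 | h2 <;>
      rw [hcoe, h1, h2] <;> simp [Matrix.one_apply]
  have hev := hdense (MvPolynomial.X ((0 : Fin 2), (1 : Fin 2))) hvan
    ⟨!![1, 1; 0, 1], by simp [Matrix.det_fin_two_of]⟩
  rw [MvPolynomial.eval_X] at hev
  simp at hev
end

section
/- Let Γ be a group with a normal subgroup Δ which is abelian and torsion-free (every element of Δ other than the identity has infinite order). Let t ∈ Γ and a ∈ Δ be such that the set S = { t^k a t^{-k} : k ∈ ℤ } is finite of cardinality p with 1 < p. Then for every integer n > p, the group Γ is not SL_n(ℂ)-free. -/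
set_option maxHeartbeats 1000000

open Module Matrix

/-- Commuting endomorphisms of a nonzero f.d. complex vector space have a common eigenvector. -/
lemma exists_common_eigenvector (m : ℕ) :
    ∀ {V : Type} [AddCommGroup V] [Module ℂ V] [FiniteDimensional ℂ V] [Nontrivial V]
      (g : Fin m → Module.End ℂ V), (∀ i j, Commute (g i) (g j)) →
      ∃ v : V, v ≠ 0 ∧ ∀ i, ∃ μ : ℂ, g i v = μ • v := by
  induction m with
  | zero =>
    intro V _ _ _ _ g _
    obtain ⟨v, hv⟩ := exists_ne (0 : V)
    exact ⟨v, hv, fun i => i.elim0⟩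
  | succ m ih =>
    intro V _ _ _ _ g hcomm
    obtain ⟨μ₀, hμ₀⟩ := Module.End.exists_eigenvalue (g 0)
    set E := Module.End.eigenspace (g 0) μ₀ with hE
    have hEbot : E ≠ ⊥ := hμ₀
    have hmaps : ∀ i : Fin m, ∀ x ∈ E, g i.succ x ∈ E := by
      intro i x hx
      rw [hE, Module.End.mem_eigenspace_iff] at hx ⊢
      calc (g 0) ((g i.succ) x) = (g i.succ) ((g 0) x) :=
            DFunLike.congr_fun (hcomm i.succ 0).symm x
        _ = μ₀ • (g i.succ) x := by rw [hx, _root_.map_smul]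
    haveI : Nontrivial E := Submodule.nontrivial_iff_ne_bot.mpr hEbot
    set G : Fin m → Module.End ℂ E := fun i => (g i.succ).restrict (hmaps i) with hG
    have hGcomm : ∀ i j, Commute (G i) (G j) := by
      intro i j
      apply LinearMap.ext
      intro x
      apply Subtype.ext
      show ((g i.succ).restrict (hmaps i) (((g j.succ).restrict (hmaps j)) x) : V)
          = ((g j.succ).restrict (hmaps j) (((g i.succ).restrict (hmaps i)) x) : V)
      rw [LinearMap.restrict_coe_apply, LinearMap.restrict_coe_apply,
          LinearMap.restrict_coe_apply, LinearMap.restrict_coe_apply]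
      exact DFunLike.congr_fun (hcomm i.succ j.succ) (x : V)
    obtain ⟨v, hv0, hv⟩ := ih G hGcomm
    refine ⟨(v : V), by simpa using hv0, ?_⟩
    intro i
    refine Fin.cases ?_ ?_ i
    · exact ⟨μ₀, Module.End.mem_eigenspace_iff.mp v.2⟩
    · intro j
      obtain ⟨μ, hμ⟩ := hv j
      refine ⟨μ, ?_⟩
      have h2 : ((G j) v : V) = μ • (v : V) := by rw [hμ]; rfl
      rwa [hG, LinearMap.restrict_coe_apply] at h2

lemma matrix_common_eigenvector {n : ℕ} [NeZero n] (m : ℕ)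
    (M : Fin m → Matrix (Fin n) (Fin n) ℂ) (h : ∀ i j, M i * M j = M j * M i) :
    ∃ v : Fin n → ℂ, v ≠ 0 ∧ ∀ i, ∃ μ : ℂ, (M i) *ᵥ v = μ • v := by
  have := exists_common_eigenvector m (fun i => (M i).mulVecLin) ?_
  · obtain ⟨v, hv0, hv⟩ := this
    refine ⟨v, hv0, fun i => ?_⟩
    obtain ⟨μ, hμ⟩ := hv i
    exact ⟨μ, by simpa [Matrix.mulVecLin_apply] using hμ⟩
  · intro i j
    show _ * _ = _ * _
    rw [Module.End.mul_eq_comp, Module.End.mul_eq_comp, ← Matrix.mulVecLin_mul,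
      ← Matrix.mulVecLin_mul, h i j]

lemma det_tensor_sub_one_eq_zero {n m : ℕ} (C : Matrix (Fin n) (Fin n) ℂ)
    (w : Fin m → Fin n → ℂ) (ν : Fin m → ℂ) (hw : ∀ k, w k ≠ 0)
    (heig : ∀ k, C *ᵥ w k = ν k • w k) (hprod : ∏ k, ν k = 1) :
    (Matrix.of (fun f g : Fin m → Fin n => ∏ k, C (f k) (g k))
      - (1 : Matrix (Fin m → Fin n) (Fin m → Fin n) ℂ)).det = 0 := by
  set K : Matrix (Fin m → Fin n) (Fin m → Fin n) ℂ :=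
    Matrix.of (fun f g : Fin m → Fin n => ∏ k, C (f k) (g k)) with hK
  set W : (Fin m → Fin n) → ℂ := fun f => ∏ k, w k (f k) with hWdef
  have hKW : K *ᵥ W = W := by
    funext f
    show ∑ g : Fin m → Fin n, (∏ k, C (f k) (g k)) * ∏ k, w k (g k) = ∏ k, w k (f k)
    calc ∑ g : Fin m → Fin n, (∏ k, C (f k) (g k)) * ∏ k, w k (g k)
        = ∑ g ∈ Fintype.piFinset (fun _ : Fin m => (Finset.univ : Finset (Fin n))),
            ∏ k, (C (f k) (g k) * w k (g k)) := by
          rw [Fintype.piFinset_univ]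
          exact Finset.sum_congr rfl fun g _ => (Finset.prod_mul_distrib).symm
      _ = ∏ k, ∑ j, C (f k) j * w k j := (Finset.prod_univ_sum (fun _ : Fin m => (Finset.univ : Finset (Fin n))) (fun k j => C (f k) j * w k j)).symm
      _ = ∏ k, (ν k * w k (f k)) := by
          refine Finset.prod_congr rfl fun k _ => ?_
          have : (C *ᵥ w k) (f k) = (ν k • w k) (f k) := by rw [heig k]
          simpa [Matrix.mulVec, dotProduct] using this
      _ = (∏ k, ν k) * ∏ k, w k (f k) := Finset.prod_mul_distrib
      _ = ∏ k, w k (f k) := by rw [hprod, one_mul]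
  have hW0 : W ≠ 0 := by
    have hfx : ∀ k, ∃ i, w k i ≠ 0 := fun k => Function.ne_iff.mp (hw k)
    choose f₀ hf₀ using hfx
    intro hWz
    have : W f₀ = 0 := by rw [hWz]; rfl
    rw [hWdef] at this
    exact (Finset.prod_ne_zero_iff.mpr (fun k _ => hf₀ k)) this
  rw [← Matrix.exists_mulVec_eq_zero_iff]
  exact ⟨W, hW0, by rw [Matrix.sub_mulVec, hKW, Matrix.one_mulVec, sub_self]⟩

noncomputable def tensorPoly (n m : ℕ) : MvPolynomial (Fin n × Fin n) ℂ :=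
  (Matrix.of (fun f g : Fin m → Fin n =>
    (∏ k, MvPolynomial.X (f k, g k)) -
      if f = g then (1 : MvPolynomial (Fin n × Fin n) ℂ) else 0)).det

lemma eval_tensorPoly {n m : ℕ} (A : Matrix (Fin n) (Fin n) ℂ) :
    MvPolynomial.eval (fun p : Fin n × Fin n => A p.1 p.2) (tensorPoly n m)
      = (Matrix.of (fun f g : Fin m → Fin n => ∏ k, A (f k) (g k))
          - (1 : Matrix (Fin m → Fin n) (Fin m → Fin n) ℂ)).det := by
  rw [tensorPoly, RingHom.map_det]
  congr 1
  ext f g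
  simp [Matrix.sub_apply, Matrix.one_apply, apply_ite
    (MvPolynomial.eval (fun p : Fin n × Fin n => A p.1 p.2))]

lemma zpow_sum_aux {α : Type*} [DecidableEq α] (s : Finset α) (e : α → ℤ) :
    ∏ i ∈ s, (2:ℂ) ^ (e i) = (2:ℂ) ^ (∑ i ∈ s, e i) := by
  induction s using Finset.induction with
  | empty => simp
  | insert x s h ih =>
    rw [Finset.prod_insert h, Finset.sum_insert h, ih, ← zpow_add₀ (two_ne_zero)]

lemma two_zpow_ne_one {z : ℤ} (hz : z ≠ 0) : (2:ℂ) ^ z ≠ 1 := by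
  intro h
  have habs : ‖(2:ℂ) ^ z‖ = 1 := by rw [h]; simp
  rw [norm_zpow] at habs
  have h2 : ‖(2:ℂ)‖ = 2 := Complex.norm_two
  rw [h2] at habs
  have := zpow_right_injective₀ (by norm_num : (0:ℝ) < 2) (by norm_num) (a := 2)
  have h0 : (2:ℝ) ^ z = (2:ℝ) ^ (0:ℤ) := by simpa using habs
  exact hz (this h0)

lemma sum_e_eq_zero (n' : ℕ) :
    ∑ i : Fin (n' + 1), (if (i : ℕ) < n' then (1:ℤ) else -(n':ℤ)) = 0 := by
  rw [Fin.sum_univ_castSucc]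
  have h1 : ∀ i : Fin n', (if ((Fin.castSucc i : Fin (n'+1)) : ℕ) < n' then (1:ℤ) else -(n':ℤ)) = 1 := by
    intro i
    simp [Fin.is_lt]
  rw [Finset.sum_congr rfl (fun i _ => h1 i)]
  simp

lemma det_diag_two (n' : ℕ) :
    (Matrix.diagonal (fun i : Fin (n'+1) =>
      (2:ℂ) ^ (if (i : ℕ) < n' then (1:ℤ) else -(n':ℤ)))).det = 1 := by
  rw [Matrix.det_diagonal, zpow_sum_aux, sum_e_eq_zero]
  · simp

lemma det_at_diag_ne_zero {n' m : ℕ} (hm : 1 ≤ m) (hmn : m ≤ n') :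
    (Matrix.of (fun f g : Fin m → Fin (n'+1) =>
        ∏ k, (Matrix.diagonal (fun i : Fin (n'+1) =>
          (2:ℂ) ^ (if (i : ℕ) < n' then (1:ℤ) else -(n':ℤ)))) (f k) (g k))
      - (1 : Matrix (Fin m → Fin (n'+1)) (Fin m → Fin (n'+1)) ℂ)).det ≠ 0 := by
  set e : Fin (n'+1) → ℤ := fun i => if (i : ℕ) < n' then (1:ℤ) else -(n':ℤ) with he
  set d : Fin (n'+1) → ℂ := fun i => (2:ℂ) ^ (e i) with hd
  have key : (Matrix.of (fun f g : Fin m → Fin (n'+1) =>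
        ∏ k, (Matrix.diagonal d) (f k) (g k))
      - (1 : Matrix (Fin m → Fin (n'+1)) (Fin m → Fin (n'+1)) ℂ))
      = Matrix.diagonal (fun f : Fin m → Fin (n'+1) => (2:ℂ) ^ (∑ k, e (f k)) - 1) := by
    ext f g
    by_cases hfg : f = g
    · subst hfg
      simp only [Matrix.sub_apply, Matrix.of_apply, Matrix.one_apply_eq,
        Matrix.diagonal_apply_eq]
      simp only [hd]
      rw [zpow_sum_aux]
    · obtain ⟨k₀, hk₀⟩ := Function.ne_iff.mp hfg
      simp only [Matrix.sub_apply, Matrix.of_apply, Matrix.one_apply_ne hfg,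
        Matrix.diagonal_apply_ne _ hfg]
      rw [Finset.prod_eq_zero (Finset.mem_univ k₀) (Matrix.diagonal_apply_ne d hk₀)]
      simp
  rw [key, Matrix.det_diagonal]
  rw [Finset.prod_ne_zero_iff]
  intro f _
  refine sub_ne_zero_of_ne (two_zpow_ne_one ?_)
  have hsplit : ∑ k, e (f k)
      = ((Finset.univ.filter (fun k => ((f k : ℕ) < n'))).card : ℤ) * 1
        + ((Finset.univ.filter (fun k => ¬ ((f k : ℕ) < n'))).card : ℤ) * (-(n':ℤ)) := by
    rw [he]
    rw [Finset.sum_ite _ _]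
    simp [Finset.sum_const, nsmul_eq_mul]
  set s := (Finset.univ.filter (fun k => ((f k : ℕ) < n'))).card with hs
  set r := (Finset.univ.filter (fun k => ¬ ((f k : ℕ) < n'))).card with hr
  have hsr : s + r = m := by
    rw [hs, hr]
    simpa using Finset.card_filter_add_card_filter_not
      (s := (Finset.univ : Finset (Fin m))) (p := fun k => ((f k : ℕ) < n'))
  rw [hsplit]
  clear_value s r
  rcases Nat.eq_zero_or_pos r with hr0 | hr1
  · subst hr0
    simp only [mul_one, Nat.cast_zero, zero_mul, add_zero]
    omega
  · have hw : (n':ℤ) ≤ (r:ℤ) * n' := le_mul_of_one_le_left (by positivity) (by exact_mod_cast hr1)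
    rw [mul_neg]
    generalize hgen : (r:ℤ) * (n':ℤ) = w at hw ⊢
    omega

/-- If `Γ` has a normal, abelian, torsion-free subgroup `Δ`, `t ∈ Γ`, `a ∈ Δ`, and the
conjugacy orbit `{ tᵏ a t⁻ᵏ : k ∈ ℤ }` is finite of cardinality `p` with `1 < p`, then
`Γ` is not `SL_n(ℂ)`-free for any `n > p`. -/
theorem not_SLFree_of_finite_conjugation_orbit
    (Γ : Type*) [Group Γ] (Δ : Subgroup Γ) (hΔn : Δ.Normal)
    (hab : ∀ x ∈ Δ, ∀ y ∈ Δ, x * y = y * x)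
    (htf : ∀ x ∈ Δ, x ≠ 1 → ¬ IsOfFinOrder x)
    (t : Γ) (a : Γ) (ha : a ∈ Δ) (p : ℕ) (hp : 1 < p)
    (hS : Set.ncard {x : Γ | ∃ k : ℤ, x = t ^ k * a * t ^ (-k)} = p)
    (hSfin : {x : Γ | ∃ k : ℤ, x = t ^ k * a * t ^ (-k)}.Finite) :
    ∀ n : ℕ, p < n → ¬ IsSLFree n Γ := by
  intro n hn hfree
  -- t and a do not commute
  have hta : t * a ≠ a * t := by
    intro h
    have hcomm : Commute t a := h
    have hall : ∀ k : ℤ, t ^ k * a * t ^ (-k) = a := by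
      intro k
      have h2 : t ^ k * a = a * t ^ k := (hcomm.zpow_left k).eq
      rw [h2, mul_assoc, ← _root_.zpow_add, add_neg_cancel, zpow_zero, mul_one]
    have hSa : {x : Γ | ∃ k : ℤ, x = t ^ k * a * t ^ (-k)} = {a} := by
      ext x
      constructor
      · rintro ⟨k, rfl⟩; exact hall k
      · rintro rfl; exact ⟨0, by simp⟩
    rw [hSa, Set.ncard_singleton] at hS
    omega
  -- pigeonhole: some positive power of t at most p commutes with a
  obtain ⟨m, hm1, hmp, hcm⟩ : ∃ m : ℕ, 1 ≤ m ∧ m ≤ p ∧ t ^ m * a = a * t ^ m := by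
    have hcard : hSfin.toFinset.card = p := by
      rw [Set.ncard_eq_toFinset_card _ hSfin] at hS; exact hS
    set F : Fin (p+1) → {x // x ∈ hSfin.toFinset} := fun i =>
      ⟨t ^ ((i:ℕ):ℤ) * a * t ^ (-((i:ℕ):ℤ)), by
        rw [Set.Finite.mem_toFinset]; exact ⟨(i:ℕ), rfl⟩⟩ with hF
    obtain ⟨i, j, hne, heq⟩ := Fintype.exists_ne_map_eq_of_card_lt F
      (by rw [Fintype.card_fin, Fintype.card_coe, hcard]; omega)
    have hval : t ^ ((i:ℕ):ℤ) * a * t ^ (-((i:ℕ):ℤ))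
        = t ^ ((j:ℕ):ℤ) * a * t ^ (-((j:ℕ):ℤ)) := by
      have := congrArg Subtype.val heq
      simpa [hF] using this
    -- generic step
    have key : ∀ u v : ℤ, u ≤ v →
        (t ^ u * a * t ^ (-u) = t ^ v * a * t ^ (-v)) →
        t ^ (v - u) * a = a * t ^ (v - u) := by
      intro u v _ he
      rw [_root_.zpow_neg, _root_.zpow_neg] at he
      have h5 : t ^ (v - u) * a * (t ^ (v - u))⁻¹ = a := by
        have hvu : t ^ (v - u) = (t ^ u)⁻¹ * t ^ v := by
          rw [← _root_.zpow_neg, ← _root_.zpow_add]; ring_nf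
        rw [hvu]
        rw [_root_.mul_inv_rev, inv_inv]
        calc (t ^ u)⁻¹ * t ^ v * a * ((t ^ v)⁻¹ * t ^ u)
            = (t ^ u)⁻¹ * (t ^ v * a * (t ^ v)⁻¹) * t ^ u := by
              simp [mul_assoc]
          _ = (t ^ u)⁻¹ * (t ^ u * a * (t ^ u)⁻¹) * t ^ u := by rw [← he]
          _ = a := by simp [mul_assoc]
      calc t ^ (v - u) * a = (t ^ (v - u) * a * (t ^ (v-u))⁻¹) * t ^ (v - u) := by
            simp [mul_assoc]
        _ = a * t ^ (v - u) := by rw [h5]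
    rcases hne.lt_or_gt with hij | hij
    · have hij' : (i:ℕ) < (j:ℕ) := hij
      refine ⟨(j:ℕ) - (i:ℕ), by omega, by omega, ?_⟩
      have := key _ _ (by exact_mod_cast hij'.le) hval
      rw [show ((j:ℕ):ℤ) - ((i:ℕ):ℤ) = (((j:ℕ) - (i:ℕ) : ℕ) : ℤ) by omega] at this
      rw [zpow_natCast] at this
      exact this
    · have hij' : (j:ℕ) < (i:ℕ) := hij
      refine ⟨(i:ℕ) - (j:ℕ), by omega, by omega, ?_⟩
      have := key _ _ (by exact_mod_cast hij'.le) hval.symm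
      rw [show ((i:ℕ):ℤ) - ((j:ℕ):ℤ) = (((i:ℕ) - (j:ℕ) : ℕ) : ℤ) by omega] at this
      rw [zpow_natCast] at this
      exact this
  -- the commutator c
  set c : Γ := a * t * a⁻¹ * t⁻¹ with hcdef
  have hc1 : c ≠ 1 := by
    intro h
    apply hta
    have h2 : a * t * a⁻¹ = t := by
      have := mul_inv_eq_iff_eq_mul.mp h
      rw [one_mul] at this
      exact this
    calc t * a = (a * t * a⁻¹) * a := by rw [h2]
      _ = a * t := by simp [mul_assoc]
  have hcΔ : c ∈ Δ := by
    have : c = a * (t * a⁻¹ * t⁻¹) := by rw [hcdef]; simp [mul_assoc]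
    rw [this]
    exact Subgroup.mul_mem _ ha (hΔn.conj_mem _ (Subgroup.inv_mem _ ha) t)
  have hckΔ : ∀ k : ℕ, t ^ k * c * (t ^ k)⁻¹ ∈ Δ := fun k => hΔn.conj_mem _ hcΔ _
  have hckcomm : ∀ k l : ℕ, (t ^ k * c * (t ^ k)⁻¹) * (t ^ l * c * (t ^ l)⁻¹)
      = (t ^ l * c * (t ^ l)⁻¹) * (t ^ k * c * (t ^ k)⁻¹) :=
    fun k l => hab _ (hckΔ k) _ (hckΔ l)
  -- the key relation
  have hrel : (c * t) ^ m = t ^ m := by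
    have hct : c * t = a * t * a⁻¹ := by rw [hcdef]; simp [mul_assoc]
    rw [hct, conj_pow, ← hcm]
    simp [mul_assoc]
  haveI : NeZero n := ⟨by omega⟩
  have hvan : ∀ A ∈ {A | ∃ φ : Γ →* Matrix.SpecialLinearGroup (Fin n) ℂ, φ c = A},
      MvPolynomial.eval (fun q => (A : Matrix (Fin n) (Fin n) ℂ) q.1 q.2)
        (tensorPoly n m) = 0 := by
    rintro A ⟨φ, rfl⟩
    rw [eval_tensorPoly]
    set Csl := φ c with hCsl
    set Tsl := φ t with hTsl
    set Mk : Fin m → Matrix (Fin n) (Fin n) ℂ :=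
      fun k => ↑(Tsl ^ (k:ℕ) * Csl * (Tsl ^ (k:ℕ))⁻¹) with hMk
    have hφconj : ∀ k : ℕ, φ (t ^ k * c * (t ^ k)⁻¹) = Tsl ^ k * Csl * (Tsl ^ k)⁻¹ := by
      intro k; rw [_root_.map_mul, _root_.map_mul, map_inv, map_pow]
    have hMcomm : ∀ i j : Fin m, Mk i * Mk j = Mk j * Mk i := by
      intro i j
      have h1 := congrArg φ (hckcomm i j)
      simp only [_root_.map_mul, map_inv, map_pow] at h1
      have h2 := congrArg
        (fun X : Matrix.SpecialLinearGroup (Fin n) ℂ => (X : Matrix (Fin n) (Fin n) ℂ)) h1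
      simp only [Matrix.SpecialLinearGroup.coe_mul] at h2
      simp only [hMk, Matrix.SpecialLinearGroup.coe_mul]
      exact h2
    obtain ⟨v, hv0, hev⟩ := matrix_common_eigenvector m Mk hMcomm
    choose μ hμ using hev
    set ν : ℕ → ℂ := fun k => if h : k < m then μ ⟨k, h⟩ else 1 with hν
    set D : ℕ → Matrix.SpecialLinearGroup (Fin n) ℂ :=
      fun j => (Csl * Tsl) ^ j * (Tsl ^ j)⁻¹ with hD
    have hDstep : ∀ j : ℕ, D (j+1) = D j * (Tsl ^ j * Csl * (Tsl ^ j)⁻¹) := by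
      intro j
      simp only [hD, pow_succ]
      group
    have hDv : ∀ j : ℕ, j ≤ m → ((D j : Matrix (Fin n) (Fin n) ℂ)) *ᵥ v
        = (∏ k ∈ Finset.range j, ν k) • v := by
      intro j
      induction j with
      | zero =>
        intro _
        simp [hD, Matrix.SpecialLinearGroup.coe_one, Matrix.one_mulVec]
      | succ j ih =>
        intro hj
        have hlt : j < m := hj
        rw [hDstep j, Matrix.SpecialLinearGroup.coe_mul, ← Matrix.mulVec_mulVec]
        have heq : (↑(Tsl ^ j * Csl * (Tsl ^ j)⁻¹) : Matrix (Fin n) (Fin n) ℂ) *ᵥ v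
            = ν j • v := by
          have h1 := hμ ⟨j, hlt⟩
          simp only [hMk] at h1
          simpa [hν, hlt] using h1
        rw [heq, Matrix.mulVec_smul, ih (le_of_lt hlt), Finset.prod_range_succ, smul_smul,
          mul_comm]
    have hDm : D m = 1 := by
      have h1 := congrArg φ hrel
      rw [map_pow, map_pow, _root_.map_mul, ← hCsl, ← hTsl] at h1
      rw [hD]
      simp only [h1]
      group
    have hprodν : ∏ k ∈ Finset.range m, ν k = 1 := by
      have h2 := hDv m le_rfl
      rw [hDm, Matrix.SpecialLinearGroup.coe_one, Matrix.one_mulVec] at h2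
      obtain ⟨i, hi⟩ := Function.ne_iff.mp hv0
      have h3 := congrFun h2 i
      simp only [Pi.smul_apply, smul_eq_mul] at h3
      exact mul_right_cancel₀ hi (h3.symm.trans (one_mul (v i)).symm)
    set w : Fin m → (Fin n → ℂ) :=
      fun k => (↑((Tsl ^ (k:ℕ))⁻¹) : Matrix (Fin n) (Fin n) ℂ) *ᵥ v with hw
    have hweig : ∀ k : Fin m,
        (↑Csl : Matrix (Fin n) (Fin n) ℂ) *ᵥ w k = ν (k:ℕ) • w k := by
      intro k
      simp only [hw]
      rw [Matrix.mulVec_mulVec, ← Matrix.SpecialLinearGroup.coe_mul]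
      have hgr : Csl * (Tsl ^ (k:ℕ))⁻¹
          = (Tsl ^ (k:ℕ))⁻¹ * (Tsl ^ (k:ℕ) * Csl * (Tsl ^ (k:ℕ))⁻¹) := by group
      rw [hgr, Matrix.SpecialLinearGroup.coe_mul, ← Matrix.mulVec_mulVec]
      rw [show (↑(Tsl ^ (k:ℕ) * Csl * (Tsl ^ (k:ℕ))⁻¹) : Matrix (Fin n) (Fin n) ℂ)
        = Mk k from rfl, hμ k, Matrix.mulVec_smul]
      congr 1
      simp [hν, k.isLt]
    have hwne : ∀ k : Fin m, w k ≠ 0 := by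
      intro k hk0
      apply hv0
      have h1 : (↑(Tsl ^ (k:ℕ)) : Matrix (Fin n) (Fin n) ℂ) *ᵥ w k = v := by
        simp only [hw]
        rw [Matrix.mulVec_mulVec, ← Matrix.SpecialLinearGroup.coe_mul, mul_inv_cancel,
          Matrix.SpecialLinearGroup.coe_one, Matrix.one_mulVec]
      rw [hk0, Matrix.mulVec_zero] at h1
      exact h1.symm
    have hprod' : ∏ k : Fin m, ν (k:ℕ) = 1 := by
      rw [← Finset.prod_range (fun k => ν k)]
      exact hprodν
    exact det_tensor_sub_one_eq_zero (↑Csl) w (fun k => ν (k:ℕ)) hwne hweig hprod'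
  obtain ⟨n', rfl⟩ : ∃ n', n = n' + 1 := ⟨n - 1, by omega⟩
  set Astar : Matrix.SpecialLinearGroup (Fin (n'+1)) ℂ :=
    ⟨Matrix.diagonal (fun i : Fin (n'+1) =>
      (2:ℂ) ^ (if (i:ℕ) < n' then (1:ℤ) else -(n':ℤ))), det_diag_two n'⟩ with hAstar
  have hz := hfree c hc1 (tensorPoly (n'+1) m) hvan Astar
  rw [show ((Astar : Matrix (Fin (n'+1)) (Fin (n'+1)) ℂ)) = Matrix.diagonal (fun i : Fin (n'+1) =>
      (2:ℂ) ^ (if (i:ℕ) < n' then (1:ℤ) else -(n':ℤ))) from rfl] at hz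
  rw [eval_tensorPoly] at hz
  exact det_at_diag_ne_zero hm1 (by omega) hz
end

section
/- Let Γ be a torsion-free group (every element other than the identity has infinite order) which is virtually abelian (Γ has an abelian subgroup of finite index) but not itself abelian. Then there exists an integer n ≥ 2 such that Γ is not SL_n(ℂ)-free. -/
open Module Matrix

namespace myproof



theorem exists_common_eigvec :
    ∀ (m : ℕ) (V : Type) (_ : AddCommGroup V) (_ : Module ℂ V),
      FiniteDimensional ℂ V → Nontrivial V →
      ∀ (l : List (Module.End ℂ V)), l.length = m →
      (∀ f ∈ l, ∀ g ∈ l, Commute f g) →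
      ∃ v : V, v ≠ 0 ∧ ∀ f ∈ l, ∃ μ : ℂ, f v = μ • v := by
  intro m
  induction m with
  | zero =>
    intro V _ _ _ hnt l hl _
    obtain ⟨v, hv⟩ := exists_ne (0 : V)
    exact ⟨v, hv, by simp [List.length_eq_zero_iff.mp hl]⟩
  | succ m ih =>
    intro V _ _ hfd hnt l hl hcomm
    match l with
    | f :: t =>
      obtain ⟨μ, hμ⟩ := Module.End.exists_eigenvalue f
      set E := f.eigenspace μ with hE
      haveI : Nontrivial E := Submodule.nontrivial_iff_ne_bot.mpr hμ
      have hmaps : ∀ g ∈ t, ∀ x ∈ E, g x ∈ E := by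
        intro g hg x hx
        rw [Module.End.mem_eigenspace_iff] at hx ⊢
        have hfg : Commute f g := hcomm f (by simp) g (by simp [hg])
        calc f (g x) = g (f x) := by
              have := congrArg (fun h => h x) hfg.eq
              simpa using this
          _ = μ • g x := by rw [hx, _root_.map_smul]
      set t' : List (Module.End ℂ E) :=
        t.attach.map (fun g => LinearMap.restrict g.1 (hmaps g.1 g.2)) with ht'
      have hlen : t'.length = m := by
        simp [ht']
        simpa using Nat.succ_injective hl
      have hcomm' : ∀ f' ∈ t', ∀ g' ∈ t', Commute f' g' := by
        intro f' hf' g' hg'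
        simp only [ht', List.mem_map, List.mem_attach, true_and] at hf' hg'
        obtain ⟨⟨a, ha⟩, rfl⟩ := hf'
        obtain ⟨⟨b, hb⟩, rfl⟩ := hg'
        have hab : Commute a b := hcomm a (by simp [ha]) b (by simp [hb])
        ext x
        have := congrArg (fun h => h (x : V)) hab.eq
        simpa [Commute, SemiconjBy, Module.End.mul_apply, LinearMap.restrict_apply,
          Subtype.ext_iff] using this
      obtain ⟨v, hv0, hv⟩ := ih E _ _ (inferInstance) (inferInstance) t' hlen hcomm'
      refine ⟨(v : V), by simpa using hv0, ?_⟩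
      intro g hg
      rcases List.mem_cons.mp hg with rfl | hgt
      · exact ⟨μ, Module.End.mem_eigenspace_iff.mp v.2⟩
      · have hmem : LinearMap.restrict g (hmaps g hgt) ∈ t' := by
          simp only [ht', List.mem_map]
          exact ⟨⟨g, hgt⟩, List.mem_attach _ _, rfl⟩
        obtain ⟨ν, hν⟩ := hv _ hmem
        refine ⟨ν, ?_⟩
        have := congrArg (Subtype.val) hν
        simpa [LinearMap.restrict_apply] using this



/-- Common eigenvector for finitely many commuting matrices. -/
theorem matrix_common_eigvec {n : ℕ} (hn : n ≠ 0) (k : ℕ)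
    (Ms : ℕ → Matrix (Fin n) (Fin n) ℂ)
    (hcomm : ∀ i j, Ms i * Ms j = Ms j * Ms i) :
    ∃ v : Fin n → ℂ, v ≠ 0 ∧ ∀ i < k, ∃ μ : ℂ, Ms i *ᵥ v = μ • v := by
  haveI : Nonempty (Fin n) := ⟨⟨0, Nat.pos_of_ne_zero hn⟩⟩
  set l : List (Module.End ℂ (Fin n → ℂ)) :=
    (List.range k).map (fun i => Matrix.toLinAlgEquiv' (Ms i)) with hl
  have hcomm' : ∀ f ∈ l, ∀ g ∈ l, Commute f g := by
    intro f hf g hg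
    simp only [hl, List.mem_map, List.mem_range] at hf hg
    obtain ⟨i, _, rfl⟩ := hf
    obtain ⟨j, _, rfl⟩ := hg
    show _ * _ = _ * _
    rw [← _root_.map_mul, ← _root_.map_mul, hcomm]

  obtain ⟨v, hv0, hv⟩ := exists_common_eigvec l.length (Fin n → ℂ) _ _
    inferInstance inferInstance l rfl hcomm'
  refine ⟨v, hv0, ?_⟩
  intro i hi
  obtain ⟨μ, hμ⟩ := hv (Matrix.toLinAlgEquiv' (Ms i))
    (by simp only [hl, List.mem_map, List.mem_range]; exact ⟨i, hi, rfl⟩)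
  exact ⟨μ, by rwa [Matrix.toLinAlgEquiv'_apply] at hμ⟩


variable {k n : ℕ}

/-- `k`-fold Kronecker power of a matrix. -/
def kpow (k : ℕ) {n : ℕ} (M : Matrix (Fin n) (Fin n) ℂ) :
    Matrix (Fin k → Fin n) (Fin k → Fin n) ℂ :=
  Matrix.of fun f g => ∏ i, M (f i) (g i)

theorem kpow_mulVec (M : Matrix (Fin n) (Fin n) ℂ) (vs : Fin k → (Fin n → ℂ)) :
    kpow k M *ᵥ (fun f => ∏ i, vs i (f i)) = fun f => ∏ i, (M *ᵥ vs i) (f i) := by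
  funext f
  simp only [Matrix.mulVec, dotProduct, kpow, Matrix.of_apply]
  have : ∀ g : Fin k → Fin n,
      (∏ i, M (f i) (g i)) * ∏ i, vs i (g i) = ∏ i, (M (f i) (g i) * vs i (g i)) := by
    intro g; rw [Finset.prod_mul_distrib]
  simp only [this]
  rw [Fintype.prod_sum (fun (i : Fin k) (j : Fin n) => M (f i) j * vs i j)]






/-- Key vanishing lemma. -/
theorem det_kpow_sub_one_eq_zero {k n : ℕ} (hn : n ≠ 0)
    (M : Matrix (Fin n) (Fin n) ℂ)
    (Y Yi Ms : ℕ → Matrix (Fin n) (Fin n) ℂ)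
    (hYi : ∀ j, Yi j * Y j = 1) (hiY : ∀ j, Y j * Yi j = 1)
    (hconj : ∀ j, Y j * M = Ms j * Y j)
    (hcomm : ∀ i j, Ms i * Ms j = Ms j * Ms i)
    (hprod : ((List.range k).map Ms).prod = 1) :
    (kpow k M - 1).det = 0 := by
  obtain ⟨v, hv0, hv⟩ := matrix_common_eigvec hn k Ms hcomm
  -- choose eigenvalues
  have hch : ∀ i, ∃ μ : ℂ, i < k → Ms i *ᵥ v = μ • v := by
    intro i
    by_cases hi : i < k
    · obtain ⟨μ, hμ⟩ := hv i hi
      exact ⟨μ, fun _ => hμ⟩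
    · exact ⟨0, fun h => absurd h hi⟩
  choose μ hμ using hch
  -- eigenvectors of M itself
  set v' : ℕ → (Fin n → ℂ) := fun j => Yi j *ᵥ v with hv'
  have hv'ne : ∀ j, v' j ≠ 0 := by
    intro j hj
    apply hv0
    have : Y j *ᵥ (Yi j *ᵥ v) = v := by
      rw [Matrix.mulVec_mulVec, hiY, Matrix.one_mulVec]
    rw [show Yi j *ᵥ v = v' j from rfl, hj, Matrix.mulVec_zero] at this
    exact this.symm
  have hMYi : ∀ j, M * Yi j = Yi j * Ms j := by
    intro j
    have h1 : Yi j * (Y j * M) * Yi j = Yi j * (Ms j * Y j) * Yi j := by rw [hconj]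
    calc M * Yi j = (Yi j * Y j) * M * Yi j := by rw [hYi, one_mul]
      _ = Yi j * (Y j * M) * Yi j := by simp only [mul_assoc]
      _ = Yi j * (Ms j * Y j) * Yi j := h1
      _ = Yi j * Ms j * (Y j * Yi j) := by rw [mul_assoc, mul_assoc, mul_assoc]
      _ = Yi j * Ms j := by rw [hiY, mul_one]
  have heig : ∀ j < k, M *ᵥ v' j = μ j • v' j := by
    intro j hj
    calc M *ᵥ v' j = (M * Yi j) *ᵥ v := by rw [hv', Matrix.mulVec_mulVec]
      _ = (Yi j * Ms j) *ᵥ v := by rw [hMYi]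
      _ = Yi j *ᵥ (Ms j *ᵥ v) := by rw [Matrix.mulVec_mulVec]
      _ = Yi j *ᵥ (μ j • v) := by rw [hμ j hj]
      _ = μ j • v' j := by rw [Matrix.mulVec_smul, hv']
  -- product of eigenvalues is 1
  have hL : ∀ j, (((List.range j).map Ms).prod) *ᵥ v =
      (∏ i ∈ Finset.range j, μ i) • v ∨ ¬ (j ≤ k) := by
    intro j
    induction j with
    | zero => left; simp [Matrix.one_mulVec]
    | succ j ihj =>
      by_cases hjk : j + 1 ≤ k
      · left
        have hjk' : j < k := hjk
        rcases ihj with ihj | ihj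
        · rw [List.range_succ, List.map_append, List.prod_append]
          simp only [List.map_cons, List.map_nil, List.prod_cons, List.prod_nil, mul_one]
          rw [← Matrix.mulVec_mulVec, hμ j hjk', Matrix.mulVec_smul, ihj,
            Finset.prod_range_succ, smul_smul, mul_comm]
        · exact absurd (le_of_lt hjk') ihj
      · right; exact hjk
  have hprodμ : (∏ i ∈ Finset.range k, μ i) = 1 := by
    rcases hL k with h | h
    · rw [hprod, Matrix.one_mulVec] at h
      apply smul_left_injective ℂ hv0
      show (∏ i ∈ Finset.range k, μ i) • v = (1 : ℂ) • v
      rw [one_smul]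
      exact h.symm
    · exact absurd le_rfl h
  -- build eigenvector of kpow
  set w : (Fin k → Fin n) → ℂ := fun f => ∏ i : Fin k, v' (i : ℕ) (f i) with hw
  have hKw : kpow k M *ᵥ w = w := by
    rw [hw, kpow_mulVec]
    funext f
    have : ∀ i : Fin k, (M *ᵥ v' (i : ℕ)) (f i) = μ i * v' i (f i) := by
      intro i
      rw [heig i i.2]
      simp
    simp only [this]
    rw [Finset.prod_mul_distrib]
    have : (∏ i : Fin k, μ (i : ℕ)) = 1 := by
      rw [Fin.prod_univ_eq_prod_range, hprodμ]
    rw [this, one_mul]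
  have hwne : w ≠ 0 := by
    have hx : ∀ i : Fin k, ∃ x : Fin n, v' (i : ℕ) x ≠ 0 := by
      intro i
      exact Function.ne_iff.mp (hv'ne i)
    choose x hxne using hx
    intro hw0
    have : w x = 0 := by rw [hw0]; rfl
    rw [hw] at this
    exact (Finset.prod_ne_zero_iff.mpr (fun i _ => hxne i)) this
  rw [← Matrix.exists_mulVec_eq_zero_iff]
  refine ⟨w, hwne, ?_⟩
  rw [Matrix.sub_mulVec, hKw, Matrix.one_mulVec, sub_self]






/-- The polynomial `det(X^{⊗k} - 1)` in the matrix entries. -/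
noncomputable def slpoly (k n : ℕ) : MvPolynomial (Fin n × Fin n) ℂ :=
  Matrix.det (Matrix.of fun f g : Fin k → Fin n =>
    (∏ i, MvPolynomial.X (f i, g i)) - if f = g then 1 else 0)

theorem slpoly_eval (k n : ℕ) (A : Matrix (Fin n) (Fin n) ℂ) :
    MvPolynomial.eval (fun p => A p.1 p.2) (slpoly k n) = (kpow k A - 1).det := by
  rw [slpoly, RingHom.map_det]
  congr 1
  ext f g
  simp only [Matrix.map_apply, Matrix.of_apply, map_sub, map_prod, MvPolynomial.eval_X,
    Matrix.sub_apply, kpow, Matrix.one_apply, apply_ite]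
  split <;> rename_i hh <;> simp [hh]

/-- witness diagonal vector -/
noncomputable def wvec (k : ℕ) : Fin (k + 1) → ℂ :=
  fun j => if j = 0 then ((2 : ℂ) ^ k)⁻¹ else 2

theorem wvec_det (k : ℕ) : (Matrix.diagonal (wvec k)).det = 1 := by
  rw [Matrix.det_diagonal]
  rw [Fin.prod_univ_succ]
  have h1 : wvec k 0 = ((2 : ℂ) ^ k)⁻¹ := by simp [wvec]
  have h2 : ∀ i : Fin k, wvec k i.succ = 2 := by
    intro i; simp [wvec, Fin.succ_ne_zero]
  simp only [h1, h2, Finset.prod_const, Finset.card_univ, Fintype.card_fin]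
  rw [inv_mul_cancel₀ (pow_ne_zero k two_ne_zero)]

theorem two_pow_complex_inj {a b : ℕ} (h : (2 : ℂ) ^ a = (2 : ℂ) ^ b) : a = b := by
  have hr : (2 : ℝ) ^ a = (2 : ℝ) ^ b := by exact_mod_cast h
  exact pow_right_injective₀ (by norm_num) (by norm_num) hr

theorem wvec_prod_ne_one (k : ℕ) (hk : k ≠ 0) (f : Fin k → Fin (k + 1)) :
    (∏ i, wvec k (f i)) ≠ 1 := by
  classical
  set r := (Finset.univ.filter fun i => f i = 0).card with hr
  have hrk : r ≤ k := by
    rw [hr]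
    exact le_trans (Finset.card_filter_le _ _) (by simp)
  have hsplit : (∏ i, wvec k (f i)) = (((2 : ℂ) ^ k)⁻¹) ^ r * 2 ^ (k - r) := by
    have : ∀ i : Fin k, wvec k (f i) = if f i = 0 then ((2 : ℂ) ^ k)⁻¹ else 2 := by
      intro i; rw [wvec]
    have hcard : (Finset.univ.filter fun x => ¬ f x = 0).card = k - r := by
      have := Finset.card_filter_add_card_filter_not
        (s := (Finset.univ : Finset (Fin k))) (p := fun i => f i = 0)
      simp only [Finset.card_univ, Fintype.card_fin] at this
      omega
    simp only [this]
    rw [Finset.prod_ite, Finset.prod_const, Finset.prod_const, hcard, ← hr]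
  rw [hsplit]
  intro heq
  have h2k : (2 : ℂ) ^ k ≠ 0 := pow_ne_zero k two_ne_zero
  have heq2 : (2 : ℂ) ^ (k - r) = ((2 : ℂ) ^ k) ^ r := by
    rw [inv_pow, inv_mul_eq_one₀ (pow_ne_zero _ h2k)] at heq
    -- heq should now be : 2 ^ (k - r) = (2 ^ k) ^ r  (or some variant)
    exact heq.symm
  rw [← pow_mul] at heq2
  have hkey := two_pow_complex_inj heq2
  have h1 : 1 ≤ r ∨ r = 0 := by omega
  rcases h1 with h1 | h1
  · have hge : k * 1 ≤ k * r := Nat.mul_le_mul_left k h1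
    rw [mul_one] at hge
    omega
  · rw [h1, Nat.mul_zero] at hkey
    omega

theorem wvec_nonvanish (k : ℕ) (hk : k ≠ 0) :
    (kpow k (Matrix.diagonal (wvec k)) - 1).det ≠ 0 := by
  classical
  have hdiag : kpow k (Matrix.diagonal (wvec k)) =
      Matrix.diagonal (fun f : Fin k → Fin (k + 1) => ∏ i, wvec k (f i)) := by
    ext f g
    by_cases hfg : f = g
    · subst hfg
      simp [kpow, Matrix.diagonal_apply_eq]
    · obtain ⟨i, hi⟩ := Function.ne_iff.mp hfg
      rw [kpow, Matrix.of_apply, Matrix.diagonal_apply_ne _ hfg]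
      exact Finset.prod_eq_zero (Finset.mem_univ i) (Matrix.diagonal_apply_ne _ hi)
  rw [hdiag, ← Matrix.diagonal_one, Matrix.diagonal_sub, Matrix.det_diagonal]
  rw [Finset.prod_ne_zero_iff]
  intro f _
  rw [sub_ne_zero]
  exact wvec_prod_ne_one k hk f




/-- If the group is torsion-free, nonabelian, and has an abelian normal subgroup `N`
of finite index, then some element of `Γ` fails to commute with some element of `N`. -/
theorem exists_noncomm (Γ : Type*) [Group Γ]
    (htf : ∀ γ : Γ, γ ≠ 1 → ¬ IsOfFinOrder γ)
    (hnab : ¬ ∀ x y : Γ, x * y = y * x)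
    (N : Subgroup Γ) [N.FiniteIndex] :
    ∃ y h : Γ, h ∈ N ∧ y * h ≠ h * y := by
  by_contra hcon
  push_neg at hcon
  have hNc : N ≤ Subgroup.center Γ := by
    intro h hh
    rw [Subgroup.mem_center_iff]
    intro y
    exact hcon y h hh
  haveI : (Subgroup.center Γ).FiniteIndex := Subgroup.finiteIndex_of_le hNc
  apply hnab
  intro x y
  have hτ : (MonoidHom.transferCenterPow Γ) (x * y * x⁻¹ * y⁻¹) = 1 := by
    rw [_root_.map_mul, _root_.map_mul, _root_.map_mul, map_inv, map_inv]
    exact mul_inv_eq_one.mpr (mul_inv_eq_iff_eq_mul.mpr (Subtype.ext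
      (Subgroup.mem_center_iff.mp ((MonoidHom.transferCenterPow Γ) y).2 _)))
  have hpow : (x * y * x⁻¹ * y⁻¹) ^ (Subgroup.center Γ).index = 1 := by
    have h' := congrArg (Subtype.val) hτ
    simp only [MonoidHom.transferCenterPow_apply, OneMemClass.coe_one] at h'
    exact h'
  have hfin : IsOfFinOrder (x * y * x⁻¹ * y⁻¹) :=
    isOfFinOrder_iff_pow_eq_one.mpr
      ⟨(Subgroup.center Γ).index,
        Nat.pos_of_ne_zero Subgroup.FiniteIndex.index_ne_zero, hpow⟩
  have h1 : x * y * x⁻¹ * y⁻¹ = 1 := by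
    by_contra hne
    exact htf _ hne hfin
  have : x * y = y * x := by
    have h2 : x * y * x⁻¹ = y := by
      rw [← mul_inv_eq_one]
      simpa [mul_assoc] using h1
    calc x * y = (x * y * x⁻¹) * x := by group
      _ = y * x := by rw [h2]
  exact this

/-- Telescoping product of conjugates. -/
theorem telescope (Γ : Type*) [Group Γ] (N : Subgroup Γ) [N.Normal]
    (hNab : ∀ a ∈ N, ∀ b ∈ N, a * b = b * a)
    (y h : Γ) (hh : h ∈ N) (k : ℕ) (hyk : y ^ k ∈ N) :
    ((List.range k).map (fun j => y ^ j * (y * h * y⁻¹ * h⁻¹) * (y ^ j)⁻¹)).prod = 1 := by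
  set u : ℕ → Γ := fun j => y ^ j * h * (y ^ j)⁻¹ with hu
  have humem : ∀ j, u j ∈ N := by
    intro j
    exact Subgroup.Normal.conj_mem ‹N.Normal› h hh (y ^ j)
  have hcc : ∀ j, y ^ j * (y * h * y⁻¹ * h⁻¹) * (y ^ j)⁻¹ = u (j + 1) * (u j)⁻¹ := by
    intro j
    rw [hu]
    simp only [pow_succ]
    group
  have key : ∀ j, ((List.range j).map (fun i => y ^ i * (y * h * y⁻¹ * h⁻¹) * (y ^ i)⁻¹)).prod
      = u j * (u 0)⁻¹ := by
    intro j
    induction j with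
    | zero => simp
    | succ j ihj =>
      rw [List.range_succ, List.map_append, List.prod_append]
      simp only [List.map_cons, List.map_nil, List.prod_cons, List.prod_nil, mul_one]
      rw [ihj, hcc]
      -- u j * (u 0)⁻¹ * (u (j+1) * (u j)⁻¹) = u (j+1) * (u 0)⁻¹
      have c0 : Commute (u 0) (u (j + 1)) := hNab _ (humem 0) _ (humem (j+1))
      have c1 : Commute (u 0)⁻¹ (u (j + 1)) := c0.inv_left
      have c2 : Commute (u j) (u (j + 1)) := hNab _ (humem j) _ (humem (j+1))
      have c0j : Commute (u 0) (u j) := hNab _ (humem 0) _ (humem j)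
      calc u j * (u 0)⁻¹ * (u (j + 1) * (u j)⁻¹)
          = u j * ((u 0)⁻¹ * u (j + 1)) * (u j)⁻¹ := by group
        _ = u j * (u (j + 1) * (u 0)⁻¹) * (u j)⁻¹ := by rw [c1.eq]
        _ = (u j * u (j + 1)) * ((u 0)⁻¹ * (u j)⁻¹) := by group
        _ = (u (j + 1) * u j) * ((u 0)⁻¹ * (u j)⁻¹) := by rw [c2.eq]
        _ = u (j + 1) * (u j * (u 0)⁻¹ * (u j)⁻¹) := by group
        _ = u (j + 1) * ((u 0)⁻¹ * u j * (u j)⁻¹) := by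
            rw [← c0j.inv_left.eq]
        _ = u (j + 1) * (u 0)⁻¹ := by group
  rw [key k]
  have huk : u k = h := by
    show y ^ k * h * (y ^ k)⁻¹ = h
    rw [hNab _ hyk _ hh]
    group
  have hu0 : u 0 = h := by
    show y ^ 0 * h * (y ^ 0)⁻¹ = h
    group
  rw [huk, hu0, mul_inv_cancel]


end myproof


/-- A torsion-free, virtually abelian, nonabelian group is not `SL_n(ℂ)`-free for
some `n ≥ 2`. -/
theorem torsionFree_virtuallyAbelian_nonabelian_not_SLFree
    (Γ : Type*) [Group Γ]
    (htf : ∀ γ : Γ, γ ≠ 1 → ¬ IsOfFinOrder γ)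
    (hva : ∃ H : Subgroup Γ, H.FiniteIndex ∧ ∀ x ∈ H, ∀ y ∈ H, x * y = y * x)
    (hnab : ¬ ∀ x y : Γ, x * y = y * x) :
    ∃ n : ℕ, 2 ≤ n ∧ ¬ IsSLFree n Γ := by
  classical
  obtain ⟨H, hHfi, hHab⟩ := hva
  haveI := hHfi
  set N := H.normalCore with hN
  haveI : N.Normal := H.normalCore_normal
  haveI hNfi : N.FiniteIndex := H.finiteIndex_normalCore
  have hNab : ∀ a ∈ N, ∀ b ∈ N, a * b = b * a := fun a ha b hb =>
    hHab a (H.normalCore_le ha) b (H.normalCore_le hb)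
  obtain ⟨y, h, hh, hyh⟩ := myproof.exists_noncomm Γ htf hnab N
  set k := N.index with hkdef
  have hk : k ≠ 0 := hNfi.index_ne_zero
  refine ⟨k + 1, by omega, ?_⟩
  intro hfree
  set γ := y * h * y⁻¹ * h⁻¹ with hγdef
  have hγ : γ ≠ 1 := by
    intro hγ1
    apply hyh
    have h2 : y * h * y⁻¹ = h := by
      rw [hγdef, mul_inv_eq_one] at hγ1
      exact hγ1
    calc y * h = (y * h * y⁻¹) * y := by group
      _ = h * y := by rw [h2]
  have hγN : γ ∈ N := by
    have h1 : y * h * y⁻¹ ∈ N := Subgroup.Normal.conj_mem ‹N.Normal› h hh y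
    have h1' : (y * h * y⁻¹) * h⁻¹ ∈ N := mul_mem h1 (inv_mem hh)
    simpa [hγdef, mul_assoc] using h1'
  have hdense := hfree γ hγ
  -- vanishing of slpoly on all values of φ γ
  have hvanish : ∀ A ∈ {A | ∃ φ : Γ →* Matrix.SpecialLinearGroup (Fin (k+1)) ℂ, φ γ = A},
      MvPolynomial.eval (fun p => (A : Matrix (Fin (k+1)) (Fin (k+1)) ℂ) p.1 p.2)
        (myproof.slpoly k (k+1)) = 0 := by
    rintro A ⟨φ, rfl⟩
    rw [myproof.slpoly_eval]
    -- set up the monoid hom to matrices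
    let ψ : Γ →* Matrix (Fin (k+1)) (Fin (k+1)) ℂ :=
      { toFun := fun g => ↑(φ g),
        map_one' := by simp,
        map_mul' := by simp }
    have hψ : ∀ g : Γ, ψ g = ↑(φ g) := fun _ => rfl
    apply myproof.det_kpow_sub_one_eq_zero (k := k) (n := k + 1) (by omega)
      (Y := fun j => ψ (y ^ j)) (Yi := fun j => ψ ((y ^ j)⁻¹))
      (Ms := fun j => ψ (y ^ j * γ * (y ^ j)⁻¹))
    · intro j
      rw [← _root_.map_mul, inv_mul_cancel, _root_.map_one]
    · intro j
      rw [← _root_.map_mul, mul_inv_cancel, _root_.map_one]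
    · intro j
      show ψ (y ^ j) * ψ γ = ψ (y ^ j * γ * (y ^ j)⁻¹) * ψ (y ^ j)
      rw [← _root_.map_mul, ← _root_.map_mul]
      congr 1
      group
    · intro i j
      rw [← _root_.map_mul, ← _root_.map_mul]
      congr 1
      exact hNab _ (Subgroup.Normal.conj_mem ‹N.Normal› γ hγN (y ^ i)) _
        (Subgroup.Normal.conj_mem ‹N.Normal› γ hγN (y ^ j))
    · have htel := myproof.telescope Γ N hNab y h hh k (N.pow_index_mem y)
      calc ((List.range k).map (fun j => ψ (y ^ j * γ * (y ^ j)⁻¹))).prod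
          = ψ (((List.range k).map (fun j => y ^ j * γ * (y ^ j)⁻¹)).prod) := by
            rw [map_list_prod, List.map_map]
            rfl
        _ = 1 := by
            rw [show (fun j => y ^ j * γ * (y ^ j)⁻¹)
              = (fun j => y ^ j * (y * h * y⁻¹ * h⁻¹) * (y ^ j)⁻¹) from rfl, htel,
              _root_.map_one]
  have hzero := hdense (myproof.slpoly k (k+1)) hvanish
    ⟨Matrix.diagonal (myproof.wvec k), myproof.wvec_det k⟩
  rw [myproof.slpoly_eval] at hzero
  exact myproof.wvec_nonvanish k hk hzero
end

section
/- For every natural number n there exists a real number C_n such that the following holds: for every finite field F with q = |F|, every natural number s < n, every natural number m, and every semisimple linear endomorphism T of F^n all of whose eigenvalues have algebraic multiplicity at most m (i.e., every root of the characteristic polynomial of T in an algebraic closure of F has multiplicity at most m), the number of s-dimensional F-subspaces W of F^n with T(W) ⊆ W is at most C_n · q^{m·s}. -/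
open Polynomial Module LinearMap



section Cyc

variable {F : Type} [Field F] {V : Type} [AddCommGroup V] [Module F V]

/-- The cyclic subspace generated by `v` under `T`. -/
noncomputable def cyc (T : V →ₗ[F] V) (v : V) : Submodule F V :=
  Submodule.span F {x | ∃ h : F[X], (Polynomial.aeval T h) v = x}

lemma aeval_mem_of_invariant {T : V →ₗ[F] V} {p : Submodule F V}
    (hp : ∀ x ∈ p, T x ∈ p) {v : V} (hv : v ∈ p) (h : F[X]) :
    (Polynomial.aeval T h) v ∈ p := by
  have hpow : ∀ k : ℕ, (T ^ k) v ∈ p := by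
    intro k
    induction k with
    | zero => simpa using hv
    | succ k ih => rw [pow_succ', Module.End.mul_apply]; exact hp _ ih
  induction h using Polynomial.induction_on' with
  | add f g hf hg => rw [map_add, LinearMap.add_apply]; exact p.add_mem hf hg
  | monomial k a =>
      rw [aeval_monomial, Module.End.mul_apply]
      have := hpow k
      rw [Algebra.algebraMap_eq_smul_one]
      simpa using p.smul_mem a (hpow k)

lemma mem_cyc_of {T : V →ₗ[F] V} (v : V) (h : F[X]) :
    (Polynomial.aeval T h) v ∈ cyc T v :=
  Submodule.subset_span ⟨h, rfl⟩

lemma self_mem_cyc (T : V →ₗ[F] V) (v : V) : v ∈ cyc T v := by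
  simpa using mem_cyc_of (T := T) v 1

lemma cyc_invariant (T : V →ₗ[F] V) (v : V) : ∀ x ∈ cyc T v, T x ∈ cyc T v := by
  intro x hx
  induction hx using Submodule.span_induction with
  | mem x hx =>
      obtain ⟨h, rfl⟩ := hx
      have : T ((Polynomial.aeval T h) v) = (Polynomial.aeval T (X * h)) v := by
        rw [map_mul, aeval_X, Module.End.mul_apply]
      rw [this]; exact mem_cyc_of v _
  | zero => simpa using (cyc T v).zero_mem
  | add x y _ _ hx hy => rw [map_add]; exact (cyc T v).add_mem hx hy
  | smul a x _ hx => rw [map_smul]; exact (cyc T v).smul_mem a hx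

lemma cyc_le_of_invariant {T : V →ₗ[F] V} {p : Submodule F V}
    (hp : ∀ x ∈ p, T x ∈ p) {v : V} (hv : v ∈ p) : cyc T v ≤ p := by
  rw [cyc, Submodule.span_le]
  rintro x ⟨h, rfl⟩
  exact aeval_mem_of_invariant hp hv h

lemma cyc_zero (T : V →ₗ[F] V) : cyc T 0 = ⊥ := by
  rw [cyc, eq_bot_iff, Submodule.span_le]
  rintro x ⟨h, rfl⟩
  simp

end Cyc

section Ann

variable {F : Type} [Field F] {V : Type} [AddCommGroup V] [Module F V]

/-- The annihilator ideal of a vector under an endomorphism. -/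
noncomputable def annI (T : V →ₗ[F] V) (v : V) : Ideal F[X] where
  carrier := {h | (Polynomial.aeval T h) v = 0}
  add_mem' := by
    intro a b ha hb
    simp only [Set.mem_setOf_eq] at *
    rw [map_add, LinearMap.add_apply, ha, hb, add_zero]
  zero_mem' := by simp
  smul_mem' := by
    intro c h hh
    simp only [Set.mem_setOf_eq, smul_eq_mul] at *
    rw [map_mul, Module.End.mul_apply, hh, map_zero]

lemma mem_annI {T : V →ₗ[F] V} {v : V} {h : F[X]} :
    h ∈ annI T v ↔ (Polynomial.aeval T h) v = 0 := Iff.rfl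

variable [FiniteDimensional F V]

/-- There is a monic annihilating polynomial of `v` dividing the minimal polynomial, whose
degree is at most the dimension of the cyclic subspace generated by `v`. -/
lemma exists_monic_ann (T : V →ₗ[F] V) (v : V) :
    ∃ g : F[X], g.Monic ∧ g ∣ minpoly F T ∧ (Polynomial.aeval T g) v = 0 ∧
      g.natDegree ≤ finrank F (cyc T v) := by
  classical
  have hint : IsIntegral F T := ⟨LinearMap.charpoly T, LinearMap.charpoly_monic T,
    LinearMap.aeval_self_charpoly T⟩
  have hμ0 : minpoly F T ≠ 0 := minpoly.ne_zero hint
  have hμmem : minpoly F T ∈ annI T v := by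
    rw [mem_annI, minpoly.aeval]; rfl
  -- the ideal is principal
  obtain ⟨a, ha⟩ : (annI T v).IsPrincipal := inferInstance
  have ha' : annI T v = Ideal.span {a} := ha
  have ha0 : a ≠ 0 := by
    rintro rfl
    rw [ha', Ideal.span_singleton_eq_bot.mpr rfl] at hμmem
    exact hμ0 (by simpa using hμmem)
  set g := normalize a with hg
  have hspan : annI T v = Ideal.span {g} := by
    rw [ha']
    exact (Ideal.span_singleton_eq_span_singleton.mpr (associated_normalize a).symm).symm
  have hgmonic : g.Monic := monic_normalize ha0
  have hdvd_iff : ∀ r : F[X], r ∈ annI T v ↔ g ∣ r := by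
    intro r; rw [hspan, Ideal.mem_span_singleton]
  refine ⟨g, hgmonic, (hdvd_iff _).mp hμmem, (hdvd_iff g).mpr dvd_rfl, ?_⟩
  -- degree bound via linear independence of T^i v, i < deg g
  set d := g.natDegree with hd
  have hli : LinearIndependent F (fun i : Fin d => (T ^ (i : ℕ)) v) := by
    rw [Fintype.linearIndependent_iff]
    intro c hc i
    have hd0 : 0 < d := i.pos
    set r : F[X] := ∑ i : Fin d, Polynomial.monomial (i : ℕ) (c i) with hr
    have hrv : (Polynomial.aeval T r) v = 0 := by
      rw [hr, map_sum, LinearMap.sum_apply, ← hc]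
      refine Finset.sum_congr rfl fun i _ => ?_
      rw [aeval_monomial, Module.End.mul_apply, Algebra.algebraMap_eq_smul_one]
      simp
    have hrmem : g ∣ r := (hdvd_iff r).mp hrv
    have hr0 : r = 0 := by
      by_contra hr0
      have hdeg : r.natDegree < d := by
        have : r.natDegree ≤ d - 1 := by
          rw [hr]
          refine Polynomial.natDegree_sum_le_of_forall_le _ _ fun i _ => ?_
          refine le_trans (Polynomial.natDegree_monomial_le _) ?_
          omega
        omega
      exact absurd (Polynomial.natDegree_le_of_dvd hrmem hr0) (by omega)
    have : r.coeff (i : ℕ) = c i := by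
      rw [hr, Polynomial.finset_sum_coeff]
      rw [Finset.sum_eq_single i]
      · simp
      · intro j _ hji
        rw [Polynomial.coeff_monomial]
        exact if_neg (fun h => hji (Fin.ext h))
      · simp
    rw [hr0] at this
    simpa using this.symm
  have hsub : Submodule.span F (Set.range fun i : Fin d => (T ^ (i : ℕ)) v) ≤ cyc T v := by
    rw [Submodule.span_le]
    rintro x ⟨i, rfl⟩
    have := mem_cyc_of (T := T) v (X ^ (i : ℕ))
    rwa [map_pow, aeval_X] at this
  calc d = finrank F (Submodule.span F (Set.range fun i : Fin d => (T ^ (i : ℕ)) v)) := by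
            rw [finrank_span_eq_card hli, Fintype.card_fin]
    _ ≤ finrank F (cyc T v) := Submodule.finrank_mono hsub

end Ann




section MatrixEig

variable {K : Type*} [Field K] {k : ℕ}

lemma eval_charpoly_eq (A : Matrix (Fin k) (Fin k) K) (lam : K) :
    (Matrix.charpoly A).eval lam = ((Matrix.scalar (Fin k)) lam - A).det := by
  rw [Matrix.charpoly, Polynomial.eval, ← Polynomial.coe_eval₂RingHom, RingHom.map_det]
  congr 1
  ext i j
  by_cases hij : i = j
  · subst hij
    simp [Matrix.charmatrix_apply_eq, Matrix.scalar_apply, Matrix.diagonal_apply_eq]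
  · simp [Matrix.charmatrix_apply_ne _ _ _ hij, Matrix.scalar_apply,
      Matrix.diagonal_apply_ne _ hij]

lemma isRoot_of_aeval_matrix_eq_zero {A : Matrix (Fin k) (Fin k) K} {h : K[X]}
    (hA : (Polynomial.aeval A) h = 0) {lam : K}
    (hroot : (Matrix.charpoly A).IsRoot lam) : h.IsRoot lam := by
  have hdet : ((Matrix.scalar (Fin k)) lam - A).det = 0 := by
    rw [← eval_charpoly_eq]; exact hroot
  obtain ⟨x, hx0, hx⟩ := (Matrix.exists_mulVec_eq_zero_iff).mpr hdet
  have hAx : A.mulVec x = lam • x := by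
    rw [Matrix.sub_mulVec] at hx
    have h1 : ((Matrix.scalar (Fin k)) lam).mulVec x = lam • x := by
      have : (Matrix.scalar (Fin k)) lam = lam • (1 : Matrix (Fin k) (Fin k) K) := by
        simp [Matrix.scalar_apply, Matrix.smul_one_eq_diagonal]
      rw [this, Matrix.smul_mulVec, Matrix.one_mulVec]
    rw [h1] at hx
    exact (sub_eq_zero.mp hx).symm
  have hpow : ∀ i : ℕ, (A ^ i).mulVec x = lam ^ i • x := by
    intro i
    induction i with
    | zero => simp [Matrix.one_mulVec]
    | succ i ih =>
        rw [pow_succ', ← Matrix.mulVec_mulVec, ih, Matrix.mulVec_smul, hAx,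
          smul_smul, pow_succ']
        rw [mul_comm]
  have hq : ∀ q : K[X], ((Polynomial.aeval A) q).mulVec x = q.eval lam • x := by
    intro q
    induction q using Polynomial.induction_on' with
    | add f g hf hg => rw [map_add, Matrix.add_mulVec, hf, hg, eval_add, add_smul]
    | monomial i a =>
        rw [aeval_monomial, ← Matrix.mulVec_mulVec, hpow, Matrix.mulVec_smul,
          Algebra.algebraMap_eq_smul_one, Matrix.smul_mulVec, Matrix.one_mulVec,
          eval_monomial, smul_smul, mul_comm]
  have := hq h
  rw [hA] at this
  simp only [Matrix.zero_mulVec] at this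
  have : h.eval lam • x = 0 := this.symm
  rcases smul_eq_zero.mp this with h0 | h0
  · exact h0
  · exact absurd h0 hx0

end MatrixEig

section Restrict

variable {F : Type} [Field F] {V : Type} [AddCommGroup V] [Module F V]

lemma aeval_restrict_apply {T : V →ₗ[F] V} {p : Submodule F V}
    (hp : ∀ x ∈ p, T x ∈ p) (h : F[X]) (x : p) :
    (((Polynomial.aeval (T.restrict hp)) h) x : V) = (Polynomial.aeval T h) (x : V) := by
  induction h using Polynomial.induction_on' with
  | add f g hf hg => rw [map_add, map_add]; simp [hf, hg]
  | monomial i a =>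
      rw [aeval_monomial, aeval_monomial]
      simp only [Module.End.mul_apply, Algebra.algebraMap_eq_smul_one]
      simp only [LinearMap.smul_apply, Module.End.one_apply, Submodule.coe_smul]
      congr 1
      rw [Module.End.pow_restrict]
      simp [LinearMap.restrict_apply]

end Restrict




section KerBound

variable {F : Type} [Field F] {V : Type} [AddCommGroup V] [Module F V]
variable [FiniteDimensional F V]


/-- charpoly of a restriction to an invariant subspace with invariant complement divides. -/
lemma charpoly_restrict_dvd {T : V →ₗ[F] V} {p q : Submodule F V}
    (hp : ∀ x ∈ p, T x ∈ p) (hq : ∀ x ∈ q, T x ∈ q) (hpq : IsCompl p q) :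
    LinearMap.charpoly (T.restrict hp) ∣ LinearMap.charpoly T := by
  let Tp := T.restrict hp
  let Tq := T.restrict hq
  let ψ := Tp.prodMap Tq
  let e := Submodule.prodEquivOfIsCompl p q hpq
  let bp := Module.Free.chooseBasis F p
  let bq := Module.Free.chooseBasis F q
  let b := bp.prod bq
  have hψ : ψ = e.symm.conj T := by
    apply b.ext
    simp only [Basis.prod_apply, LinearMap.coe_inl, LinearMap.coe_inr, LinearMap.prodMap_apply,
      LinearEquiv.conj_apply, LinearEquiv.symm_symm, Submodule.coe_prodEquivOfIsCompl,
      LinearMap.coe_comp, LinearEquiv.coe_coe, Function.comp_apply, LinearMap.coprod_apply,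
      Submodule.coe_subtype, map_add, Sum.forall, Sum.elim_inl, map_zero, ZeroMemClass.coe_zero,
      add_zero, LinearEquiv.eq_symm_apply, and_self, Submodule.coe_prodEquivOfIsCompl',
      LinearMap.restrict_coe_apply, implies_true, Sum.elim_inr, zero_add, e, ψ, Tp, Tq, b]
  have hcp : LinearMap.charpoly T = LinearMap.charpoly Tp * LinearMap.charpoly Tq := by
    rw [← e.symm.charpoly_conj T, ← hψ, LinearMap.charpoly_prodMap]
  exact ⟨LinearMap.charpoly Tq, hcp⟩

/-- Key dimension bound: the kernel of `g(T)` has dimension at most `m · deg g`. -/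
lemma finrank_ker_aeval_le (T : V →ₗ[F] V) {m : ℕ}
    (hcompl : ∀ p : Submodule F V, (∀ v ∈ p, T v ∈ p) →
      ∃ q : Submodule F V, (∀ v ∈ q, T v ∈ q) ∧ IsCompl p q)
    (hm : ∀ lam : AlgebraicClosure F,
      Polynomial.rootMultiplicity lam
        ((LinearMap.charpoly T).map (algebraMap F (AlgebraicClosure F))) ≤ m)
    {g : F[X]} (hg : g ≠ 0) :
    finrank F (LinearMap.ker ((Polynomial.aeval T) g)) ≤ m * g.natDegree := by
  classical
  set p := LinearMap.ker ((Polynomial.aeval T) g) with hpdef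
  have hp : ∀ x ∈ p, T x ∈ p := by
    intro x hx
    have hcomm : (Polynomial.aeval T g) * T = T * (Polynomial.aeval T g) := by
      have h1 : (Polynomial.aeval T) (g * X) = (Polynomial.aeval T) (X * g) := by
        rw [mul_comm]
      rw [map_mul, map_mul, aeval_X] at h1
      exact h1
    rw [LinearMap.mem_ker] at hx ⊢
    have : ((Polynomial.aeval T g) * T) x = (T * (Polynomial.aeval T g)) x := by rw [hcomm]
    rw [Module.End.mul_apply, Module.End.mul_apply] at this
    rw [this, hx, map_zero]
  obtain ⟨q, hq, hpq⟩ := hcompl p hp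
  set Tp := T.restrict hp with hTpdef
  have hdvd : LinearMap.charpoly Tp ∣ LinearMap.charpoly T := charpoly_restrict_dvd hp hq hpq
  have haevalTp : (Polynomial.aeval Tp) g = 0 := by
    ext x
    rw [aeval_restrict_apply hp g x]
    simpa using x.2
  set k := finrank F p with hk
  let b : Basis (Fin k) F p := Module.finBasis F p
  set B := LinearMap.toMatrix b b Tp with hB
  have hBcp : Matrix.charpoly B = LinearMap.charpoly Tp := LinearMap.charpoly_toMatrix Tp b
  have haevalB : (Polynomial.aeval B) g = 0 := by
    have h := Polynomial.aeval_algHom_apply (LinearMap.toMatrixAlgEquiv b).toAlgHom Tp g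
    rw [haevalTp, map_zero] at h
    exact h
  set L := AlgebraicClosure F
  set σ := algebraMap F L with hσ
  set A := B.map σ with hA
  have hAc : Matrix.charpoly A = (LinearMap.charpoly Tp).map σ := by
    rw [hA, Matrix.charpoly_map, hBcp]
  have haevalA : (Polynomial.aeval A) (g.map σ) = 0 := by
    have h1 : (Polynomial.aeval A) (g.map σ) = (Polynomial.aeval A) g :=
      aeval_map_algebraMap L A g
    have h2 : (Polynomial.aeval A) g = 0 := by
      let ψ : Matrix (Fin k) (Fin k) F →ₐ[F] Matrix (Fin k) (Fin k) L :=
        (Algebra.ofId F L).mapMatrix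
      have hAψ : A = ψ B := rfl
      rw [hAψ, Polynomial.aeval_algHom_apply ψ B g, haevalB, map_zero]
    rw [h1, h2]
  -- counting roots
  have hmonicA : (Matrix.charpoly A).Monic := Matrix.charpoly_monic A
  have hcardroots : (Matrix.charpoly A).roots.card = k := by
    have hsplits : (Matrix.charpoly A).Splits := IsAlgClosed.splits _
    rw [(Polynomial.splits_iff_card_roots).mp hsplits]
    rw [hAc, Polynomial.Monic.natDegree_map (LinearMap.charpoly_monic Tp)]
    rw [LinearMap.charpoly_natDegree]
  have hmult : ∀ lam : L, (Matrix.charpoly A).rootMultiplicity lam ≤ m := by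
    intro lam
    have hdvd2 : Matrix.charpoly A ∣ (LinearMap.charpoly T).map σ := by
      rw [hAc]
      exact Polynomial.map_dvd σ hdvd
    have hne : (LinearMap.charpoly T).map σ ≠ 0 :=
      ((LinearMap.charpoly_monic T).map σ).ne_zero
    refine le_trans ?_ (hm lam)
    refine (Polynomial.le_rootMultiplicity_iff hne).mpr ?_
    exact dvd_trans (Polynomial.pow_rootMultiplicity_dvd _ lam) hdvd2
  have hsub : (Matrix.charpoly A).roots.toFinset ⊆ (g.map σ).roots.toFinset := by
    intro lam hlam
    rw [Multiset.mem_toFinset, Polynomial.mem_roots hmonicA.ne_zero] at hlam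
    rw [Multiset.mem_toFinset, Polynomial.mem_roots (Polynomial.map_ne_zero hg)]
    exact isRoot_of_aeval_matrix_eq_zero haevalA hlam
  have hcard2 : (Matrix.charpoly A).roots.toFinset.card ≤ g.natDegree := by
    refine le_trans (Finset.card_le_card hsub) ?_
    refine le_trans (Multiset.toFinset_card_le _) ?_
    refine le_trans (Polynomial.card_roots' _) ?_
    rw [Polynomial.natDegree_map]
  calc finrank F p = (Matrix.charpoly A).roots.card := hcardroots.symm
    _ = ∑ lam ∈ (Matrix.charpoly A).roots.toFinset,
          (Matrix.charpoly A).roots.count lam := (Multiset.toFinset_sum_count_eq _).symm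
    _ = ∑ lam ∈ (Matrix.charpoly A).roots.toFinset,
          (Matrix.charpoly A).rootMultiplicity lam := by
          refine Finset.sum_congr rfl fun lam _ => ?_
          rw [Polynomial.count_roots]
    _ ≤ ∑ _lam ∈ (Matrix.charpoly A).roots.toFinset, m :=
          Finset.sum_le_sum fun lam _ => hmult lam
    _ = (Matrix.charpoly A).roots.toFinset.card * m := by rw [Finset.sum_const, smul_eq_mul]
    _ ≤ g.natDegree * m := Nat.mul_le_mul_right m hcard2
    _ = m * g.natDegree := Nat.mul_comm _ _

end KerBound




section Gen

variable {F : Type} [Field F] {V : Type} [AddCommGroup V] [Module F V]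


lemma iSup_fin_cons {α : Type*} [CompleteLattice α] {k : ℕ} (a : α) (f : Fin k → α) :
    (⨆ j : Fin (k + 1), (Fin.cons a f : Fin (k+1) → α) j) = a ⊔ ⨆ j : Fin k, f j := by
  apply le_antisymm
  · refine iSup_le fun j => ?_
    induction j using Fin.cases with
    | zero => simp [le_sup_left]
    | succ i => simp only [Fin.cons_succ]
                exact le_sup_of_le_right (le_iSup f i)
  · refine sup_le ?_ ?_
    · exact le_iSup_of_le 0 (by simp)
    · refine iSup_le fun i => le_iSup_of_le i.succ (by simp)

variable [FiniteDimensional F V]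

/-- Main structural lemma: every invariant subspace of a semisimple endomorphism is a
(direct) sum of cyclic subspaces whose annihilator degrees add up to the dimension. -/
lemma exists_cyclic_generators {T : V →ₗ[F] V} (hT : Module.End.IsSemisimple T) :
    ∀ N : ℕ, ∀ W : Submodule F V, finrank F W ≤ N → (∀ x ∈ W, T x ∈ W) →
    ∃ (k : ℕ) (v : Fin k → V) (g : Fin k → F[X]),
      k ≤ finrank F W ∧
      (∀ j, (g j).Monic ∧ g j ∣ minpoly F T ∧ (Polynomial.aeval T (g j)) (v j) = 0) ∧
      (∑ j, (g j).natDegree) ≤ finrank F W ∧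
      (⨆ j, cyc T (v j)) = W := by
  intro N
  induction N with
  | zero =>
      intro W hle _
      have hW : W = ⊥ := by
        rw [← Submodule.finrank_eq_zero (R := F) (M := V)]
        omega
      refine ⟨0, Fin.elim0, Fin.elim0, by simp, fun j => j.elim0, by simp, ?_⟩
      rw [hW, iSup_of_empty]
  | succ N ih =>
      intro W hle hWinv
      by_cases h0 : finrank F W = 0
      · have hW : W = ⊥ := by rw [← Submodule.finrank_eq_zero (R := F) (M := V)]; exact h0
        refine ⟨0, Fin.elim0, Fin.elim0, by simp, fun j => j.elim0, by simp, ?_⟩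
        rw [hW, iSup_of_empty]
      · -- pick a nonzero vector of W
        obtain ⟨v0, hv0W, hv00⟩ : ∃ v0 ∈ W, v0 ≠ 0 := by
          by_contra hcon
          push_neg at hcon
          apply h0
          have : W = ⊥ := by
            rw [eq_bot_iff]
            intro x hx
            simp [hcon x hx]
          rw [this]
          simp
        set C := cyc T v0 with hC
        have hCW : C ≤ W := cyc_le_of_invariant hWinv hv0W
        have hCinv : ∀ x ∈ C, T x ∈ C := cyc_invariant T v0
        have hCne : C ≠ ⊥ := by
          intro h
          have hmem := self_mem_cyc T v0
          rw [← hC, h] at hmem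
          exact hv00 (by simpa using hmem)
        have hCpos : 0 < finrank F C := by
          rcases Nat.eq_zero_or_pos (finrank F C) with h | h
          · exact absurd ((Submodule.finrank_eq_zero (R := F) (M := V)).mp h) hCne
          · exact h
        -- invariant complement of C inside W
        have hWmem : W ∈ Module.End.invtSubmodule T :=
          (Module.End.mem_invtSubmodule T).mpr fun x hx => hWinv x hx
        have hCmem : C ∈ Module.End.invtSubmodule T :=
          (Module.End.mem_invtSubmodule T).mpr fun x hx => hCinv x hx
        obtain ⟨r, hrW, hrmem, hdisj, hsup⟩ :=
          (Module.End.isSemisimple_restrict_iff (f := T) W hWmem).mp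
            (hT.restrict hWmem) C hCmem hCW
        have hrinv : ∀ x ∈ r, T x ∈ r := fun x hx => (Module.End.mem_invtSubmodule T).mp hrmem hx
        have hrk : finrank F C + finrank F r = finrank F W := by
          have := Submodule.finrank_sup_add_finrank_inf_eq C r
          rw [hsup, hdisj.eq_bot, finrank_bot, add_zero] at this
          omega
        have hrle : finrank F r ≤ N := by omega
        obtain ⟨k, v, g, hk, hcond, hsum, hiSup⟩ := ih r hrle hrinv
        obtain ⟨g0, hg0m, hg0dvd, hg0ann, hg0deg⟩ := exists_monic_ann T v0
        refine ⟨k + 1, Fin.cons v0 v, Fin.cons g0 g, by omega, ?_, ?_, ?_⟩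
        · intro j
          induction j using Fin.cases with
          | zero => exact ⟨hg0m, hg0dvd, by simpa using hg0ann⟩
          | succ i => simpa using hcond i
        · rw [Fin.sum_univ_succ]
          simp only [Fin.cons_zero, Fin.cons_succ]
          have : g0.natDegree ≤ finrank F C := hg0deg
          omega
        · have : (⨆ j : Fin (k+1), cyc T ((Fin.cons v0 v : Fin (k+1) → V) j)) =
              cyc T v0 ⊔ ⨆ j : Fin k, cyc T (v j) := by
            have h := iSup_fin_cons (cyc T v0) (fun j => cyc T (v j))
            rw [← h]
            congr 1
            funext j
            induction j using Fin.cases with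
            | zero => simp
            | succ i => simp
          rw [this, hiSup, ← hC, hsup]

end Gen



/-- The set of monic divisors of a nonzero polynomial over a field forms a finset of
cardinality at most `2 ^ natDegree`. -/
lemma exists_monic_divisors_finset {F : Type} [Field F] {μ : F[X]} (hμ : μ ≠ 0) :
    ∃ G : Finset F[X], (∀ g : F[X], g.Monic → g ∣ μ → g ∈ G) ∧
      (∀ g ∈ G, g.Monic ∧ g ∣ μ) ∧ G.card ≤ 2 ^ μ.natDegree := by
  classical
  set t := UniqueFactorizationMonoid.normalizedFactors μ with ht
  have hmonic_factor : ∀ f ∈ t, Monic f := by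
    intro f hf
    have hf0 : f ≠ 0 :=
      (UniqueFactorizationMonoid.irreducible_of_normalized_factor f hf).ne_zero
    have := Polynomial.monic_normalize hf0
    rwa [UniqueFactorizationMonoid.normalize_normalized_factor f hf] at this
  refine ⟨t.powerset.toFinset.image fun u => u.prod, ?_, ?_, ?_⟩
  · intro g hgm hgdvd
    have hg0 : g ≠ 0 := hgm.ne_zero
    rw [Finset.mem_image]
    refine ⟨UniqueFactorizationMonoid.normalizedFactors g, ?_, ?_⟩
    · rw [Multiset.mem_toFinset, Multiset.mem_powerset]
      exact (UniqueFactorizationMonoid.dvd_iff_normalizedFactors_le_normalizedFactors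
        hg0 hμ).mp hgdvd
    · have hassoc := UniqueFactorizationMonoid.prod_normalizedFactors hg0
      have hmonic_all : ∀ f ∈ UniqueFactorizationMonoid.normalizedFactors g, Monic f := by
        intro f hf
        have hf0 : f ≠ 0 :=
          (UniqueFactorizationMonoid.irreducible_of_normalized_factor f hf).ne_zero
        have := Polynomial.monic_normalize hf0
        rwa [UniqueFactorizationMonoid.normalize_normalized_factor f hf] at this
      have hmono : Monic (((UniqueFactorizationMonoid.normalizedFactors g).map id).prod) :=
        Polynomial.monic_multiset_prod_of_monic _ id (fun f hf => hmonic_all f hf)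
      rw [Multiset.map_id] at hmono
      exact Polynomial.eq_of_monic_of_associated hmono hgm hassoc
  · intro g hg
    rw [Finset.mem_image] at hg
    obtain ⟨u, hu, rfl⟩ := hg
    rw [Multiset.mem_toFinset, Multiset.mem_powerset] at hu
    constructor
    · have hmono : Monic ((u.map _root_.id).prod) :=
        Polynomial.monic_multiset_prod_of_monic _ _root_.id
          (fun f hf => hmonic_factor f (Multiset.mem_of_le hu hf))
      rwa [Multiset.map_id] at hmono
    · have h1 : u.prod ∣ t.prod := Multiset.prod_dvd_prod_of_le hu
      exact dvd_trans h1 (UniqueFactorizationMonoid.prod_normalizedFactors hμ).dvd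
  · refine le_trans (Finset.card_image_le) ?_
    refine le_trans (Multiset.toFinset_card_le _) ?_
    rw [Multiset.card_powerset]
    refine Nat.pow_le_pow_right (by norm_num) ?_
    -- card of normalized factors ≤ natDegree
    have hne : (0 : F[X]) ∉ t := fun h =>
      (UniqueFactorizationMonoid.zero_notMem_normalizedFactors μ) h
    have hdeg : (t.prod).natDegree = (t.map natDegree).sum :=
      Polynomial.natDegree_multiset_prod t hne
    have hassoc := UniqueFactorizationMonoid.prod_normalizedFactors hμ
    have hprod_deg : (t.prod).natDegree = μ.natDegree := by
      have h1 : t.prod ∣ μ := hassoc.dvd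
      have h2 : μ ∣ t.prod := hassoc.symm.dvd
      have ht0 : t.prod ≠ 0 := fun h => hμ (by rw [h, zero_dvd_iff] at h1; exact h1)
      exact le_antisymm (Polynomial.natDegree_le_of_dvd h1 hμ)
        (Polynomial.natDegree_le_of_dvd h2 ht0)
    have hcard_gen : ∀ u : Multiset F[X], (∀ x ∈ u, 1 ≤ natDegree x) →
        Multiset.card u ≤ (u.map natDegree).sum := by
      intro u
      induction u using Multiset.induction with
      | empty => simp
      | cons a w ih =>
          intro hone
          rw [Multiset.card_cons, Multiset.map_cons, Multiset.sum_cons]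
          have h1 := hone a (Multiset.mem_cons_self a w)
          have h2 := ih (fun x hx => hone x (Multiset.mem_cons_of_mem hx))
          omega
    have hcard : Multiset.card t ≤ (t.map natDegree).sum :=
      hcard_gen t (fun x hx =>
        (UniqueFactorizationMonoid.irreducible_of_normalized_factor x hx).natDegree_pos)
    omega


/-- For every `n` there is a constant `C_n` such that for any finite field `F` with
`q = |F|`, any `s < n`, and any semisimple endomorphism `T` of `F^n` all of whose
eigenvalues (in an algebraic closure) have algebraic multiplicity at most `m`, the
number of `s`-dimensional `T`-invariant subspaces of `F^n` is at most `C_n · q^{ms}`. -/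
theorem count_invariant_subspaces_le (n : ℕ) :
    ∃ C : ℝ, ∀ (F : Type) [Field F] [Fintype F], ∀ (s m : ℕ), s < n →
      ∀ T : (Fin n → F) →ₗ[F] (Fin n → F),
        (∀ p : Submodule F (Fin n → F), (∀ v ∈ p, T v ∈ p) →
          ∃ q : Submodule F (Fin n → F), (∀ v ∈ q, T v ∈ q) ∧ IsCompl p q) →
        (∀ lam : AlgebraicClosure F,
          Polynomial.rootMultiplicity lam
            ((LinearMap.charpoly T).map (algebraMap F (AlgebraicClosure F))) ≤ m) →
        (Set.ncard {W : Submodule F (Fin n → F) |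
            Module.finrank F W = s ∧ ∀ v ∈ W, T v ∈ W} : ℝ) ≤
          C * (Fintype.card F : ℝ) ^ (m * s) := by
  refine ⟨(2 : ℝ) ^ (n * n), ?_⟩
  intro F _ _ s m hs T hcompl hm
  classical
  set V := (Fin n → F) with hV
  have hfinV : finrank F V = n := by
    show finrank F (Fin n → F) = n
    rw [Module.finrank_pi, Fintype.card_fin]
  -- semisimplicity
  have hT : Module.End.IsSemisimple T := by
    rw [Module.End.isSemisimple_iff]
    intro p hp
    obtain ⟨q, hq, hpq⟩ := hcompl p (fun v hv => (Module.End.mem_invtSubmodule T).mp hp hv)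
    exact ⟨q, (Module.End.mem_invtSubmodule T).mpr (fun v hv => hq v hv), hpq⟩
  -- the minimal polynomial
  set μ := minpoly F T with hμdef
  have hint : IsIntegral F T := ⟨LinearMap.charpoly T, LinearMap.charpoly_monic T,
    LinearMap.aeval_self_charpoly T⟩
  have hμ0 : μ ≠ 0 := minpoly.ne_zero hint
  have hμdeg : μ.natDegree ≤ n := by
    have h1 : μ ∣ LinearMap.charpoly T := LinearMap.minpoly_dvd_charpoly T
    have h2 := Polynomial.natDegree_le_of_dvd h1 (LinearMap.charpoly_monic T).ne_zero
    rwa [LinearMap.charpoly_natDegree, hfinV] at h2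
  obtain ⟨GF, hGFmem, hGFrev, hGFcard⟩ := exists_monic_divisors_finset hμ0
  set q := Fintype.card F with hq
  -- kernel finsets
  have hqpos : 1 ≤ q := Fintype.card_pos
  set KS : F[X] → Finset V := fun h => (LinearMap.ker ((Polynomial.aeval T) h) : Set V).toFinset
    with hKS
  have hKScard : ∀ h : F[X], h ≠ 0 → (KS h).card ≤ q ^ (m * h.natDegree) := by
    intro h hh
    have h1 : (KS h).card = Fintype.card (LinearMap.ker ((Polynomial.aeval T) h)) := by
      rw [hKS]; simp [Set.toFinset_card]; convert rfl
    rw [h1, card_eq_pow_finrank (K := F)]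
    exact Nat.pow_le_pow_right hqpos (finrank_ker_aeval_le T hcompl hm hh)
  set Gfin : Finset (Fin n → F[X]) :=
    (Fintype.piFinset fun _ : Fin n => GF).filter
      (fun gt => (∑ j, (gt j).natDegree) ≤ s) with hGfin
  set KK : (Fin n → F[X]) → Finset (Fin n → V) := fun gt => Fintype.piFinset fun j => KS (gt j)
    with hKK
  set U : Finset (Fin n → V) := Gfin.biUnion KK with hU
  set S : Set (Submodule F V) :=
    {W : Submodule F V | Module.finrank F W = s ∧ ∀ v ∈ W, T v ∈ W} with hS
  -- every invariant subspace of dimension s admits a good generating tuple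
  have hEx : ∀ W ∈ S, ∃ v : Fin n → V,
      (⨆ j : Fin n, cyc T (v j)) = W ∧
      ∃ gt : Fin n → F[X],
        (∀ j, (gt j).Monic ∧ gt j ∣ μ ∧ (Polynomial.aeval T (gt j)) (v j) = 0) ∧
        (∑ j, (gt j).natDegree) ≤ s := by
    rintro W ⟨hWrank, hWinv⟩
    obtain ⟨k, v, g, hk, hcond, hsum, hiSup⟩ :=
      exists_cyclic_generators hT (finrank F W) W le_rfl hWinv
    rw [hWrank] at hk hsum
    have hkn : k ≤ n := by omega
    set v' : Fin n → V := fun j => if h : (j : ℕ) < k then v ⟨j, h⟩ else 0 with hv'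
    set g' : Fin n → F[X] := fun j => if h : (j : ℕ) < k then g ⟨j, h⟩ else 1 with hg'
    refine ⟨v', ?_, g', ?_, ?_⟩
    · apply le_antisymm
      · refine iSup_le fun j => ?_
        by_cases h : (j : ℕ) < k
        · have : v' j = v ⟨j, h⟩ := by simp only [hv']; exact dif_pos h
          rw [this, ← hiSup]
          exact le_iSup (fun i : Fin k => cyc T (v i)) ⟨j, h⟩
        · have : v' j = 0 := by simp only [hv']; exact dif_neg h
          rw [this, cyc_zero]
          exact bot_le
      · rw [← hiSup]
        refine iSup_le fun i => ?_
        have hin : (i : ℕ) < n := lt_of_lt_of_le i.2 hkn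
        refine le_iSup_of_le ⟨i, hin⟩ (le_of_eq ?_)
        congr 1
        simp only [hv']
        rw [dif_pos (show ((⟨i, hin⟩ : Fin n) : ℕ) < k from i.2)]
    · intro j
      by_cases h : (j : ℕ) < k
      · have h1 : g' j = g ⟨j, h⟩ := by simp only [hg']; exact dif_pos h
        have h2 : v' j = v ⟨j, h⟩ := by simp only [hv']; exact dif_pos h
        rw [h1, h2]
        exact hcond ⟨j, h⟩
      · have h1 : g' j = 1 := by simp only [hg']; exact dif_neg h
        have h2 : v' j = 0 := by simp only [hv']; exact dif_neg h
        rw [h1, h2]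
        exact ⟨Polynomial.monic_one, one_dvd _, by simp⟩
    · set D : ℕ → ℕ := fun i => if h : i < k then (g ⟨i, h⟩).natDegree else 0 with hD
      have h1 : ∀ j : Fin n, (g' j).natDegree = D (j : ℕ) := by
        intro j
        simp only [hg', hD]
        by_cases h : (j : ℕ) < k
        · rw [dif_pos h, dif_pos h]
        · rw [dif_neg h, dif_neg h, Polynomial.natDegree_one]
      calc (∑ j : Fin n, (g' j).natDegree) = ∑ j : Fin n, D (j : ℕ) :=
            Finset.sum_congr rfl fun j _ => h1 j
        _ = ∑ i ∈ Finset.range n, D i := Fin.sum_univ_eq_sum_range D n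
        _ = ∑ i ∈ Finset.range k, D i := by
            refine (Finset.sum_subset (Finset.range_subset_range.mpr hkn) ?_).symm
            intro i _ hik
            rw [Finset.mem_range] at hik
            simp only [hD]
            exact dif_neg hik
        _ = ∑ j : Fin k, D (j : ℕ) := (Fin.sum_univ_eq_sum_range D k).symm
        _ = ∑ j : Fin k, (g j).natDegree := by
            refine Finset.sum_congr rfl fun j _ => ?_
            simp only [hD]
            rw [dif_pos j.2]
        _ ≤ s := hsum
  -- the injection into tuples
  set Φ : Submodule F V → (Fin n → V) := fun W =>
    if h : W ∈ S then Classical.choose (hEx W h) else 0 with hΦ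
  have hΦspec : ∀ W (h : W ∈ S),
      (⨆ j : Fin n, cyc T (Φ W j)) = W ∧
      ∃ gt : Fin n → F[X],
        (∀ j, (gt j).Monic ∧ gt j ∣ μ ∧ (Polynomial.aeval T (gt j)) (Φ W j) = 0) ∧
        (∑ j, (gt j).natDegree) ≤ s := by
    intro W h
    have hΦW : Φ W = Classical.choose (hEx W h) := by
      simp only [hΦ]
      exact dif_pos h
    rw [hΦW]
    exact Classical.choose_spec (hEx W h)
  have hmaps : ∀ W ∈ S, Φ W ∈ (U : Set (Fin n → V)) := by
    intro W h
    obtain ⟨-, gt, hgt, hgtsum⟩ := hΦspec W h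
    rw [Finset.mem_coe, hU, Finset.mem_biUnion]
    refine ⟨gt, ?_, ?_⟩
    · rw [hGfin, Finset.mem_filter]
      refine ⟨?_, hgtsum⟩
      rw [Fintype.mem_piFinset]
      exact fun j => hGFmem (gt j) (hgt j).1 (hgt j).2.1
    · rw [hKK]
      rw [Fintype.mem_piFinset]
      intro j
      rw [hKS]
      simp only [Set.mem_toFinset, SetLike.mem_coe, LinearMap.mem_ker]
      exact (hgt j).2.2
  have hinj : Set.InjOn Φ S := by
    intro W1 h1 W2 h2 heq
    have e1 := (hΦspec W1 h1).1
    have e2 := (hΦspec W2 h2).1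
    rw [← e1, ← e2, heq]
  -- counting
  have hcount : Set.ncard S ≤ U.card := by
    have := Set.ncard_le_ncard_of_injOn Φ hmaps hinj (U : Set (Fin n → V)).toFinite
    rwa [Set.ncard_coe_finset] at this
  have hUbound : U.card ≤ 2 ^ (n * n) * q ^ (m * s) := by
    have hKKcard : ∀ gt ∈ Gfin, (KK gt).card ≤ q ^ (m * s) := by
      intro gt hgt
      rw [hGfin, Finset.mem_filter, Fintype.mem_piFinset] at hgt
      obtain ⟨hmem, hsum⟩ := hgt
      have hmonic : ∀ j, (gt j).Monic ∧ gt j ∣ μ := fun j => hGFrev (gt j) (hmem j)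
      rw [hKK]
      simp only
      rw [Fintype.card_piFinset]
      calc (∏ j, (KS (gt j)).card) ≤ ∏ j : Fin n, q ^ (m * (gt j).natDegree) :=
            Finset.prod_le_prod (fun _ _ => Nat.zero_le _)
              (fun j _ => hKScard (gt j) (hmonic j).1.ne_zero)
        _ = q ^ (∑ j, m * (gt j).natDegree) := by
            rw [Finset.prod_pow_eq_pow_sum]
        _ = q ^ (m * ∑ j, (gt j).natDegree) := by rw [Finset.mul_sum]
        _ ≤ q ^ (m * s) := Nat.pow_le_pow_right hqpos (Nat.mul_le_mul_left m hsum)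
    calc U.card ≤ ∑ gt ∈ Gfin, (KK gt).card := Finset.card_biUnion_le
      _ ≤ ∑ _gt ∈ Gfin, q ^ (m * s) := Finset.sum_le_sum hKKcard
      _ = Gfin.card * q ^ (m * s) := by rw [Finset.sum_const, smul_eq_mul]
      _ ≤ 2 ^ (n * n) * q ^ (m * s) := by
          refine Nat.mul_le_mul_right _ ?_
          have h1 : Gfin.card ≤ (Fintype.piFinset fun _ : Fin n => GF).card :=
            Finset.card_filter_le _ _
          rw [Fintype.card_piFinset] at h1
          have h2 : (∏ _j : Fin n, GF.card) = GF.card ^ n := by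
            rw [Finset.prod_const, Finset.card_univ, Fintype.card_fin]
          rw [h2] at h1
          refine le_trans h1 ?_
          calc GF.card ^ n ≤ (2 ^ n) ^ n := by
                refine Nat.pow_le_pow_left ?_ n
                exact le_trans hGFcard (Nat.pow_le_pow_right (by norm_num) hμdeg)
            _ = 2 ^ (n * n) := by rw [← pow_mul]
  -- conclude over ℝ
  have hfinal : Set.ncard S ≤ 2 ^ (n * n) * q ^ (m * s) := le_trans hcount hUbound
  calc (Set.ncard S : ℝ) ≤ ((2 ^ (n * n) * q ^ (m * s) : ℕ) : ℝ) := by exact_mod_cast hfinal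
    _ = (2 : ℝ) ^ (n * n) * (q : ℝ) ^ (m * s) := by push_cast; ring
end
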